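/- arXiv:math/0609119 — 2 statements merged into one kernel-verified Lean document; each statement's English description precedes it below -/
import Mathlib

section
/- Let n ≥ 2, let 𝔽 be a field and let S_2 ⊆ C([n],2). Then the simplicial matroid Sim_2^n(S_2) is superdense if and only if it is supersolvable. -/
/-!
Common definitions for simplicial matroids, following Cordovil–Lemos–Linhares Sales,
"Dirac's theorem on simplicial matroids".

We model `[n] = {1,…,n}` by `Fin n`, and a subset of `[n]` by a `Finset (Fin n)`.
A family `S_k ⊆ C([n],k)` is a `Finset (Finset (Fin n))` (all of whose members
have cardinality `k`, which is imposed by hypotheses in the theorems).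
-/

open Finset

/-- The incidence number `[F' : F]`: if `F = i₁ < i₂ < ⋯ < iₘ` and `F' = F \ {iⱼ}`
then `[F' : F] = (-1)ʲ` (with `j` the 1-based position of the deleted element),
and `[F' : F] = 0` otherwise. -/
def inc {n : ℕ} (F' F : Finset (Fin n)) : ℤ :=
  ∑ i ∈ F, if F' = F.erase i then (-1 : ℤ) ^ (F.filter (fun j => j ≤ i)).card else 0

/-- The family `C([n], m)` of `m`-element subsets of `[n]`, as a type. -/
abbrev Csets (n m : ℕ) := {F : Finset (Fin n) // F.card = m}

/-- `∂_k F`, the boundary of a single `k`-subset `F` of `[n]`,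
as a vector of `𝔽^{C([n],k-1)}`. -/
def bvec (𝔽 : Type*) [Field 𝔽] (n k : ℕ) (F : Finset (Fin n)) : Csets n (k - 1) → 𝔽 :=
  fun F' => ((inc F'.1 F : ℤ) : 𝔽)

/-- Independence in the simplicial matroid `Sim_k^n(S_k)` over `𝔽`:
`X ⊆ S_k` is independent iff the vectors `∂_k F`, `F ∈ X`, are linearly independent. -/
def SimIndep (𝔽 : Type*) [Field 𝔽] (n k : ℕ) (Sk X : Finset (Finset (Fin n))) : Prop :=
  X ⊆ Sk ∧ LinearIndependent 𝔽 (fun F : X => bvec 𝔽 n k F.1)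

/-- A circuit of `Sim_k^n(S_k)`: a minimal dependent subset of the ground set. -/
def SimCircuit (𝔽 : Type*) [Field 𝔽] (n k : ℕ) (Sk C : Finset (Finset (Fin n))) : Prop :=
  C ⊆ Sk ∧ ¬ LinearIndependent 𝔽 (fun F : C => bvec 𝔽 n k F.1) ∧
    ∀ C' ⊂ C, LinearIndependent 𝔽 (fun F : C' => bvec 𝔽 n k F.1)

/-- The rank (in `Sim_k^n`) of a set `X` of `k`-subsets of `[n]`:
the dimension of the span of the boundaries of its members. -/
noncomputable def simRank (𝔽 : Type*) [Field 𝔽] (n k : ℕ) (X : Finset (Finset (Fin n))) : ℕ :=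
  Module.finrank 𝔽 (Submodule.span 𝔽 ((fun F => bvec 𝔽 n k F) '' (X : Set (Finset (Fin n)))))

/-- A cocircuit of `Sim_k^n(S_k)`, i.e. a circuit of the dual matroid:
a minimal set `C ⊆ S_k` whose complement does not span (`X` is independent in the dual
matroid iff `r(E ∖ X) = r(E)`). -/
def SimCocircuit (𝔽 : Type*) [Field 𝔽] (n k : ℕ) (Sk C : Finset (Finset (Fin n))) : Prop :=
  C ⊆ Sk ∧ simRank 𝔽 n k (Sk \ C) < simRank 𝔽 n k Sk ∧
    ∀ C' ⊂ C, simRank 𝔽 n k (Sk \ C') = simRank 𝔽 n k Sk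

/-- The boundary map `∂_k : 𝔽^{S_k} → 𝔽^{C([n],k-1)}`. -/
noncomputable def bdryMap (𝔽 : Type*) [Field 𝔽] (n k : ℕ) (Sk : Finset (Finset (Fin n))) :
    (↥Sk → 𝔽) →ₗ[𝔽] (Csets n (k - 1) → 𝔽) :=
  Matrix.mulVecLin (Matrix.of fun (F' : Csets n (k - 1)) (F : ↥Sk) => ((inc F'.1 F.1 : ℤ) : 𝔽))

/-- The coboundary `δ^{k-1} V` of a `(k-1)`-subset `V` of `[n]`,
as a vector of `𝔽^{S_k}`; its `F`-coordinate is `[V : F]`. -/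
def cobdry (𝔽 : Type*) [Field 𝔽] {n : ℕ} (Sk : Finset (Finset (Fin n)))
    (V : Finset (Fin n)) : ↥Sk → 𝔽 :=
  fun F => ((inc V F.1 : ℤ) : 𝔽)

/-- The boundary `∂_{k+1} X` of a `(k+1)`-subset `X` of `[n]`, regarded as a vector
of `𝔽^{S_k}`; its `F`-coordinate is `[F : X]`. -/
def pbdry (𝔽 : Type*) [Field 𝔽] {n : ℕ} (Sk : Finset (Finset (Fin n)))
    (X : Finset (Fin n)) : ↥Sk → 𝔽 :=
  fun F => ((inc F.1 X : ℤ) : 𝔽)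

open scoped Classical in
/-- The support of a vector of `𝔽^{S_k}`, as a set of `k`-subsets of `[n]`. -/
noncomputable def suppFin {𝔽 : Type*} [Field 𝔽] {n : ℕ} {Sk : Finset (Finset (Fin n))}
    (v : ↥Sk → 𝔽) : Finset (Finset (Fin n)) :=
  (Sk.attach.filter fun F => v F ≠ 0).image Subtype.val

/-- `supp(δ^{k-1} V) ⊆ S_k`. -/
noncomputable def suppδ (𝔽 : Type*) [Field 𝔽] {n : ℕ} (Sk : Finset (Finset (Fin n)))
    (V : Finset (Fin n)) : Finset (Finset (Fin n)) :=
  suppFin (cobdry 𝔽 Sk V)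

/-- The cocircuit space of `Sim_k^n(S_k)`: the orthogonal complement, with respect to the
standard bilinear form on `𝔽^{S_k}`, of the circuit space `ker ∂_k`. -/
noncomputable def cocircSpace (𝔽 : Type*) [Field 𝔽] (n k : ℕ) (Sk : Finset (Finset (Fin n))) :
    Submodule 𝔽 (↥Sk → 𝔽) where
  carrier := {w | ∀ v ∈ LinearMap.ker (bdryMap 𝔽 n k Sk), ∑ F, v F * w F = 0}
  zero_mem' := by intro v hv; simp
  add_mem' := by
    intro a b ha hb v hv
    have h1 := ha v hv
    have h2 := hb v hv
    simp only [Pi.add_apply, mul_add, Finset.sum_add_distrib]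
    rw [h1, h2, add_zero]
  smul_mem' := by
    intro c w hw v hv
    have h := hw v hv
    simp only [Pi.smul_apply, smul_eq_mul]
    calc ∑ F, v F * (c * w F) = ∑ F, c * (v F * w F) := by
          exact Finset.sum_congr rfl fun F _ => by ring
      _ = c * ∑ F, v F * w F := (Finset.mul_sum _ _ _).symm
      _ = 0 := by rw [h, mul_zero]

/-- The faces of the `k`-hyperclique complex `⟨S_k⟩`: all `F ⊆ [n]` with `|F| < k`,
together with all `F` every `k`-element subset of which lies in `S_k`. -/
def IsFace {n : ℕ} (k : ℕ) (Sk : Finset (Finset (Fin n))) (F : Finset (Fin n)) : Prop :=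
  F.card < k ∨ ∀ G ⊆ F, G.card = k → G ∈ Sk

/-- A facet of `⟨S_k⟩`: an inclusion-maximal face. -/
def IsFacet {n : ℕ} (k : ℕ) (Sk : Finset (Finset (Fin n))) (F : Finset (Fin n)) : Prop :=
  IsFace k Sk F ∧ ∀ G, IsFace k Sk G → F ⊆ G → F = G

/-- `V` is simplicial in `⟨S_k⟩` if there is exactly one facet `X` of `⟨S_k⟩`
with `V ⊊ X`. -/
def SimplicialFace {n : ℕ} (k : ℕ) (Sk : Finset (Finset (Fin n))) (V : Finset (Fin n)) : Prop :=
  ∃! X, IsFacet k Sk X ∧ V ⊂ X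

/-- The `k`-skeleta of the complexes `Δ_0 = ⟨S_k⟩`, `Δ_{j+1} = Δ_j ∖∖ V_j`, where
`Δ ∖∖ V = ⟨(skeleton of Δ) ∖ supp(δ^{k-1} V)⟩` (0-indexed). -/
noncomputable def delSeq (𝔽 : Type*) [Field 𝔽] {n : ℕ} (Sk : Finset (Finset (Fin n)))
    (V : ℕ → Finset (Fin n)) : ℕ → Finset (Finset (Fin n))
  | 0 => Sk
  | j + 1 => delSeq 𝔽 Sk V j \ suppδ 𝔽 (delSeq 𝔽 Sk V j) (V j)

/-- `C*_j := supp(δ^{k-1} V_j) ∖ ⋃_{i<j} supp(δ^{k-1} V_i)` (0-indexed). -/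
noncomputable def Cstar (𝔽 : Type*) [Field 𝔽] {n : ℕ} (Sk : Finset (Finset (Fin n)))
    (V : ℕ → Finset (Fin n)) (j : ℕ) : Finset (Finset (Fin n)) :=
  suppδ 𝔽 Sk (V j) \ (Finset.range j).biUnion (fun i => suppδ 𝔽 Sk (V i))

/-- `(V_1,…,V_r)` (0-indexed: `V 0, …, V (r-1)`) is a basic linear sequence for `⟨S_k⟩`,
where `r` is the rank of `Sim_k^n(S_k)`: each `V_j` is a `(k-1)`-subset of `[n]` and each
`C*_j` is a cocircuit of `Sim_k^n(S_k(Δ_{j-1}))`. -/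
def BasicLinearSeq (𝔽 : Type*) [Field 𝔽] (n k : ℕ) (Sk : Finset (Finset (Fin n))) (r : ℕ)
    (V : ℕ → Finset (Fin n)) : Prop :=
  simRank 𝔽 n k Sk = r ∧ (∀ j < r, (V j).card = k - 1) ∧
    ∀ j < r, SimCocircuit 𝔽 n k (delSeq 𝔽 Sk V j) (Cstar 𝔽 Sk V j)

/-- `⟨S_k⟩` is D-perfect: there is a basic linear sequence `V_1,…,V_r` such that each `V_j`
is simplicial in `Δ_{j-1}`. -/
def DPerfect (𝔽 : Type*) [Field 𝔽] (n k : ℕ) (Sk : Finset (Finset (Fin n))) : Prop :=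
  ∃ V : ℕ → Finset (Fin n),
    BasicLinearSeq 𝔽 n k Sk (simRank 𝔽 n k Sk) V ∧
      ∀ j < simRank 𝔽 n k Sk, SimplicialFace k (delSeq 𝔽 Sk V j) (V j)

/-- A flat of `Sim_k^n(S_k)`: a closed subset of the ground set. -/
def SimFlat (𝔽 : Type*) [Field 𝔽] (n k : ℕ) (Sk X : Finset (Finset (Fin n))) : Prop :=
  X ⊆ Sk ∧ ∀ F ∈ Sk,
    bvec 𝔽 n k F ∈ Submodule.span 𝔽 ((fun G => bvec 𝔽 n k G) '' (X : Set (Finset (Fin n)))) →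
      F ∈ X

/-- A hyperplane of `Sim_k^n(S_k)`: a flat of rank one less than the rank of the matroid. -/
def SimHyperplane (𝔽 : Type*) [Field 𝔽] (n k : ℕ) (Sk H : Finset (Finset (Fin n))) : Prop :=
  SimFlat 𝔽 n k Sk H ∧ simRank 𝔽 n k H + 1 = simRank 𝔽 n k Sk

/-- A modular flat of `Sim_k^n(S_k)`:
`r(X) + r(Y) = r(X ∪ Y) + r(X ∩ Y)` for every flat `Y`. -/
def ModularFlat (𝔽 : Type*) [Field 𝔽] (n k : ℕ) (Sk X : Finset (Finset (Fin n))) : Prop :=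
  SimFlat 𝔽 n k Sk X ∧ ∀ Y, SimFlat 𝔽 n k Sk Y →
    simRank 𝔽 n k X + simRank 𝔽 n k Y = simRank 𝔽 n k (X ∪ Y) + simRank 𝔽 n k (X ∩ Y)

open scoped Classical in
/-- The closure of `X` in `Sim_k^n(S_k)`. -/
noncomputable def simClosure (𝔽 : Type*) [Field 𝔽] (n k : ℕ)
    (Sk X : Finset (Finset (Fin n))) : Finset (Finset (Fin n)) :=
  Sk.filter fun F =>
    bvec 𝔽 n k F ∈ Submodule.span 𝔽 ((fun G => bvec 𝔽 n k G) '' (X : Set (Finset (Fin n))))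

/-- `Sim_k^n(S_k)` is supersolvable: it admits a maximal chain of modular flats
`cl(∅) = X_0 ⊊ X_1 ⊊ ⋯ ⊊ X_r = S_k`, `r` the rank. -/
def Supersolvable (𝔽 : Type*) [Field 𝔽] (n k : ℕ) (Sk : Finset (Finset (Fin n))) : Prop :=
  ∃ X : ℕ → Finset (Finset (Fin n)),
    X 0 = simClosure 𝔽 n k Sk ∅ ∧ X (simRank 𝔽 n k Sk) = Sk ∧
      (∀ i < simRank 𝔽 n k Sk, X i ⊂ X (i + 1)) ∧
      ∀ i ≤ simRank 𝔽 n k Sk, ModularFlat 𝔽 n k Sk (X i)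

/-- `H` is a dense hyperplane of `Sim_k^n(ground)`: a hyperplane of the form
`ground ∖ supp(δ^{k-1} V)` for some `(k-1)`-subset `V` simplicial in `⟨ground⟩`. -/
def DenseHyp (𝔽 : Type*) [Field 𝔽] (n k : ℕ) (ground H : Finset (Finset (Fin n))) : Prop :=
  SimHyperplane 𝔽 n k ground H ∧
    ∃ V : Finset (Fin n), V.card = k - 1 ∧ SimplicialFace k ground V ∧
      H = ground \ suppδ 𝔽 ground V

/-- `Sim_k^n(S_k)` is superdense: there is a chain `∅ = X_0 ⊊ X_1 ⊊ ⋯ ⊊ X_r = S_k` of flats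
(`r` the rank) with each `X_i` a dense hyperplane of `Sim_k^n(X_{i+1})`. -/
def Superdense (𝔽 : Type*) [Field 𝔽] (n k : ℕ) (Sk : Finset (Finset (Fin n))) : Prop :=
  ∃ X : ℕ → Finset (Finset (Fin n)),
    X 0 = ∅ ∧ X (simRank 𝔽 n k Sk) = Sk ∧
      (∀ i ≤ simRank 𝔽 n k Sk, SimFlat 𝔽 n k Sk (X i)) ∧
      (∀ i < simRank 𝔽 n k Sk, X i ⊂ X (i + 1)) ∧
      ∀ i < simRank 𝔽 n k Sk, DenseHyp 𝔽 n k (X (i + 1)) (X i)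

/-- `Sim_k^n(S_k)` is triangulable over `𝔽`: the boundaries of the `(k+1)`-faces of `⟨S_k⟩`
span the circuit space `ker ∂_k`. -/
def Triangulable (𝔽 : Type*) [Field 𝔽] (n k : ℕ) (Sk : Finset (Finset (Fin n))) : Prop :=
  Submodule.span 𝔽
      {v : ↥Sk → 𝔽 | ∃ X : Finset (Fin n), X.card = k + 1 ∧ IsFace k Sk X ∧ v = pbdry 𝔽 Sk X}
    = LinearMap.ker (bdryMap 𝔽 n k Sk)

/-- `Sim_k^n(S_k)` is strongly triangulable over `𝔽`: there are `(k+1)`-faces `X_1,…,X_{m'}`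
of `⟨S_k⟩` whose boundaries span `ker ∂_k` and such that every circuit `C` has a
representing vector `C⃗` with support `C` which is a combination, with nonzero coefficients,
of boundaries `∂_{k+1} X_{i_j}` with `⋃_{F ∈ C} F = ⋃_j X_{i_j}`. -/
def StronglyTriangulable (𝔽 : Type*) [Field 𝔽] (n k : ℕ)
    (Sk : Finset (Finset (Fin n))) : Prop :=
  ∃ (m' : ℕ) (Xs : Fin m' → Finset (Fin n)),
    (∀ i, (Xs i).card = k + 1 ∧ IsFace k Sk (Xs i)) ∧
    Submodule.span 𝔽 (Set.range fun i => pbdry 𝔽 Sk (Xs i)) = LinearMap.ker (bdryMap 𝔽 n k Sk) ∧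
    ∀ C, SimCircuit 𝔽 n k Sk C →
      ∃ (s : ℕ) (idx : Fin s → Fin m') (a : Fin s → 𝔽) (Cv : ↥Sk → 𝔽),
        (∀ j, a j ≠ 0) ∧ suppFin Cv = C ∧
        Cv = ∑ j, a j • pbdry 𝔽 Sk (Xs (idx j)) ∧
        C.biUnion id = Finset.univ.biUnion fun j : Fin s => Xs (idx j)

/-- The simple graph `([n], S_2)`. -/
def graphOf {n : ℕ} (S2 : Finset (Finset (Fin n))) : SimpleGraph (Fin n) where
  Adj u v := u ≠ v ∧ ({u, v} : Finset (Fin n)) ∈ S2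
  symm := by
    constructor
    intro u v h
    exact ⟨h.1.symm, by rw [Finset.pair_comm]; exact h.2⟩
  loopless := by constructor; intro u h; exact h.1 rfl

/-- A simple graph is chordal if every cycle of length at least four has a chord, i.e. an
edge of the graph joining two non-consecutive vertices of the cycle. -/
def Chordal {α : Type*} (G : SimpleGraph α) : Prop :=
  ∀ (v : α) (w : G.Walk v v), w.IsCycle → 4 ≤ w.length →
    ∃ u₁ u₂, u₁ ∈ w.support ∧ u₂ ∈ w.support ∧ G.Adj u₁ u₂ ∧ s(u₁, u₂) ∉ w.edges

section PartI

open Finset Module Submodule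

variable {𝔽 : Type*} [Field 𝔽] {n : ℕ}

/-- The oriented edge vector `χ_{a} - χ_{b}` in `𝔽^{C([n],1)}`. -/
def ovec (𝔽 : Type*) [Field 𝔽] {n : ℕ} (a b : Fin n) : Csets n (2-1) → 𝔽 :=
  fun V => (if V.1 = {a} then (1:𝔽) else 0) - (if V.1 = {b} then (1:𝔽) else 0)

lemma ovec_neg (a b : Fin n) : ovec 𝔽 b a = - ovec 𝔽 a b := by
  funext V; unfold ovec; rw [Pi.neg_apply]; ring

lemma ovec_cancel (a b c : Fin n) : ovec 𝔽 a b + ovec 𝔽 b c = ovec 𝔽 a c := by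
  funext V; unfold ovec; rw [Pi.add_apply]; ring

lemma inc_pair {a b : Fin n} (hab : a < b) (V : Finset (Fin n)) :
    inc V {a,b} = (if V = {a} then 1 else 0) - (if V = {b} then 1 else 0) := by
  have hne : a ≠ b := ne_of_lt hab
  have h1 : ({a,b} : Finset (Fin n)).erase a = {b} :=
    Finset.erase_insert (by simp [hne])
  have h2 : ({a,b} : Finset (Fin n)).erase b = {a} := by
    rw [Finset.pair_comm]
    exact Finset.erase_insert (by simp [hne.symm])
  have f1 : ({a,b} : Finset (Fin n)).filter (fun j => j ≤ a) = {a} := by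
    ext x
    simp only [Finset.mem_filter, Finset.mem_insert, Finset.mem_singleton]
    constructor
    · rintro ⟨h | h, hle⟩
      · exact h
      · exact absurd (h ▸ hle) (not_le.mpr hab)
    · rintro rfl; exact ⟨Or.inl rfl, le_refl _⟩
  have f2 : ({a,b} : Finset (Fin n)).filter (fun j => j ≤ b) = {a,b} := by
    apply Finset.filter_true_of_mem
    intro x hx
    rcases Finset.mem_insert.mp hx with rfl | hx
    · exact le_of_lt hab
    · exact le_of_eq (Finset.mem_singleton.mp hx)
  unfold inc
  rw [Finset.sum_pair hne, h1, h2, f1, f2, Finset.card_singleton,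
    Finset.card_pair hne]
  have : ¬ (V = {a} ∧ V = {b}) := by
    rintro ⟨rfl, h⟩
    exact hne (Finset.singleton_injective (h ▸ rfl))
  by_cases hva : V = {a} <;> by_cases hvb : V = {b} <;>
    simp [hva, hvb, hne] at this ⊢ <;> ring

lemma bvec_pair {a b : Fin n} (hab : a < b) :
    bvec 𝔽 n 2 {a,b} = ovec 𝔽 a b := by
  funext V
  simp only [bvec, ovec, inc_pair hab V.1]
  push_cast
  split_ifs <;> norm_num

lemma bvec_pair' {a b : Fin n} (hab : a ≠ b) :
    bvec 𝔽 n 2 {a,b} = ovec 𝔽 a b ∨ bvec 𝔽 n 2 {a,b} = - ovec 𝔽 a b := by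
  rcases lt_or_gt_of_ne hab with h | h
  · exact Or.inl (bvec_pair h)
  · right
    rw [Finset.pair_comm, bvec_pair h, ovec_neg]

/-- Every 2-element set is a pair `{a,b}` with `a ≠ b` whose `bvec` is `± ovec a b`. -/
lemma bvec_repr {F : Finset (Fin n)} (hF : F.card = 2) :
    ∃ a b : Fin n, a ≠ b ∧ F = {a,b} ∧
      (bvec 𝔽 n 2 F = ovec 𝔽 a b ∨ bvec 𝔽 n 2 F = - ovec 𝔽 a b) := by
  obtain ⟨a, b, hab, rfl⟩ := Finset.card_eq_two.mp hF
  exact ⟨a, b, hab, rfl, bvec_pair' hab⟩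

/-- Coordinate evaluation at the singleton `{u}`, as a linear map. -/
def evc (𝔽 : Type*) [Field 𝔽] {n : ℕ} (u : Fin n) : (Csets n (2-1) → 𝔽) →ₗ[𝔽] 𝔽 :=
  LinearMap.proj (⟨{u}, by norm_num⟩ : Csets n (2-1))

lemma evc_ovec (u a b : Fin n) :
    evc 𝔽 u (ovec 𝔽 a b) = (if u = a then (1:𝔽) else 0) - (if u = b then 1 else 0) := by
  simp only [evc, LinearMap.proj_apply, ovec, Finset.singleton_inj]

lemma evc_ovec_notmem {u a b : Fin n} (ha : u ≠ a) (hb : u ≠ b) :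
    evc 𝔽 u (ovec 𝔽 a b) = 0 := by
  rw [evc_ovec, if_neg ha, if_neg hb, sub_zero]

/-- If `u` is not a vertex of the 2-set `F` then the `u`-coordinate of `∂F` vanishes. -/
lemma evc_bvec_notmem {u : Fin n} {F : Finset (Fin n)} (hF : F.card = 2) (hu : u ∉ F) :
    evc 𝔽 u (bvec 𝔽 n 2 F) = 0 := by
  obtain ⟨a, b, hab, rfl, h | h⟩ := bvec_repr (𝔽 := 𝔽) hF <;> rw [h] <;>
    [skip; rw [map_neg, neg_eq_zero]] <;>
    exact evc_ovec_notmem (fun h => hu (h ▸ by simp)) (fun h => hu (h ▸ by simp))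

/-- If `u ∈ F` then the `u`-coordinate of `∂F` is `±1`; in particular it is nonzero. -/
lemma evc_bvec_mem {u : Fin n} {F : Finset (Fin n)} (hF : F.card = 2) (hu : u ∈ F) :
    evc 𝔽 u (bvec 𝔽 n 2 F) ≠ 0 := by
  obtain ⟨a, b, hab, rfl, h | h⟩ := bvec_repr (𝔽 := 𝔽) hF <;> rw [h] <;>
    [skip; rw [map_neg, neg_ne_zero]] <;>
    · rw [evc_ovec]
      rcases Finset.mem_insert.mp hu with rfl | hu'
      · rw [if_pos rfl, if_neg hab, sub_zero]; exact one_ne_zero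
      · rw [Finset.mem_singleton.mp hu', if_pos rfl, if_neg hab.symm]
        simpa using one_ne_zero

/-- The span of the boundary vectors of the members of `X`. -/
noncomputable def sp (𝔽 : Type*) [Field 𝔽] {n : ℕ} (X : Finset (Finset (Fin n))) :
    Submodule 𝔽 (Csets n (2-1) → 𝔽) :=
  Submodule.span 𝔽 ((fun F => bvec 𝔽 n 2 F) '' (X : Set (Finset (Fin n))))

lemma simRank_eq (X : Finset (Finset (Fin n))) :
    simRank 𝔽 n 2 X = Module.finrank 𝔽 (sp 𝔽 X) := rfl

lemma bvec_mem_sp {X : Finset (Finset (Fin n))} {F : Finset (Fin n)} (hF : F ∈ X) :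
    bvec 𝔽 n 2 F ∈ sp 𝔽 X :=
  Submodule.subset_span ⟨F, by simpa using hF, rfl⟩

lemma sp_mono {X Y : Finset (Finset (Fin n))} (h : X ⊆ Y) : sp 𝔽 X ≤ sp 𝔽 Y :=
  Submodule.span_mono (Set.image_mono (by exact_mod_cast h))

lemma sp_empty : sp 𝔽 (∅ : Finset (Finset (Fin n))) = ⊥ := by
  simp [sp]

lemma sp_union (X Y : Finset (Finset (Fin n))) : sp 𝔽 (X ∪ Y) = sp 𝔽 X ⊔ sp 𝔽 Y := by
  rw [sp, Finset.coe_union, Set.image_union, Submodule.span_union]; rfl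

lemma sp_le_iff {X : Finset (Finset (Fin n))} {U : Submodule 𝔽 (Csets n (2-1) → 𝔽)} :
    sp 𝔽 X ≤ U ↔ ∀ F ∈ X, bvec 𝔽 n 2 F ∈ U := by
  rw [sp, Submodule.span_le]
  constructor
  · intro h F hF; exact h ⟨F, by simpa using hF, rfl⟩
  · rintro h _ ⟨F, hF, rfl⟩; exact h F (by simpa using hF)

lemma sp_insert (X : Finset (Finset (Fin n))) (F : Finset (Fin n)) :
    sp 𝔽 (insert F X) = Submodule.span 𝔽 {bvec 𝔽 n 2 F} ⊔ sp 𝔽 X := by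
  rw [sp, Finset.coe_insert, Set.image_insert_eq, Submodule.span_insert]; rfl

/-- Coordinates of vectors in the span of edges avoiding `v` vanish at `v`. -/
lemma evc_sp_zero {X : Finset (Finset (Fin n))} (h2 : ∀ e ∈ X, e.card = 2)
    {v : Fin n} (hv : ∀ e ∈ X, v ∉ e) {w : Csets n (2-1) → 𝔽} (hw : w ∈ sp 𝔽 X) :
    evc 𝔽 v w = 0 := by
  induction hw using Submodule.span_induction with
  | mem x hx =>
      obtain ⟨F, hF, rfl⟩ := hx
      have hF' : F ∈ X := by simpa using hF
      exact evc_bvec_notmem (h2 F hF') (hv F hF')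
  | zero => simp
  | add x y _ _ hx hy => rw [map_add, hx, hy, add_zero]
  | smul c x _ hx => rw [map_smul, hx, smul_zero]

/-- An edge at `v` is not in the span of edges avoiding `v`. -/
lemma bvec_notin_sp {X : Finset (Finset (Fin n))} (h2 : ∀ e ∈ X, e.card = 2)
    {v : Fin n} (hv : ∀ e ∈ X, v ∉ e) {F : Finset (Fin n)} (hF : F.card = 2) (hvF : v ∈ F) :
    bvec 𝔽 n 2 F ∉ sp 𝔽 X :=
  fun h => evc_bvec_mem hF hvF (evc_sp_zero h2 hv h)

lemma bvec_ne_zero {F : Finset (Fin n)} (hF : F.card = 2) : bvec 𝔽 n 2 F ≠ 0 := by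
  obtain ⟨a, b, hab, rfl⟩ := Finset.card_eq_two.mp hF
  intro h
  exact evc_bvec_mem hF (Finset.mem_insert_self a {b}) (by rw [h]; simp)

lemma findim_ambient : FiniteDimensional 𝔽 (Csets n (2-1) → 𝔽) := by infer_instance

/-- Adding one vector outside a subspace raises `finrank` by one. -/
lemma finrank_sup_singleton {U : Submodule 𝔽 (Csets n (2-1) → 𝔽)}
    {a : Csets n (2-1) → 𝔽} (ha : a ∉ U) :
    Module.finrank 𝔽 ↥(Submodule.span 𝔽 {a} ⊔ U) = Module.finrank 𝔽 U + 1 := by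
  have ha0 : a ≠ 0 := fun h => ha (h ▸ U.zero_mem)
  have hinf : Submodule.span 𝔽 {a} ⊓ U = ⊥ := by
    rw [Submodule.eq_bot_iff]
    intro x ⟨hx1, hx2⟩
    obtain ⟨c, rfl⟩ := Submodule.mem_span_singleton.mp hx1
    rcases eq_or_ne c 0 with rfl | hc
    · simp
    · exact absurd ((U.smul_mem_iff hc).mp hx2) ha
  have := Submodule.finrank_sup_add_finrank_inf_eq (Submodule.span 𝔽 {a}) U
  rw [hinf, finrank_bot, add_zero, finrank_span_singleton ha0] at this
  omega

lemma simRank_mono {X Y : Finset (Finset (Fin n))} (h : X ⊆ Y) :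
    simRank 𝔽 n 2 X ≤ simRank 𝔽 n 2 Y := by
  rw [simRank_eq, simRank_eq]
  exact Submodule.finrank_mono (sp_mono h)

lemma simRank_empty : simRank 𝔽 n 2 (∅ : Finset (Finset (Fin n))) = 0 := by
  rw [simRank_eq, sp_empty, finrank_bot]

/-- A strict inclusion of a flat in a set gives a strict rank inequality. -/
lemma simRank_lt_of_flat {X Y : Finset (Finset (Fin n))} (hXY : X ⊆ Y)
    (hflat : ∀ F ∈ Y, bvec 𝔽 n 2 F ∈ sp 𝔽 X → F ∈ X) (hne : X ≠ Y) :
    simRank 𝔽 n 2 X < simRank 𝔽 n 2 Y := by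
  obtain ⟨F, hFY, hFX⟩ : ∃ F, F ∈ Y ∧ F ∉ X := by
    by_contra h
    push_neg at h
    exact hne (Finset.Subset.antisymm hXY (fun F hF => h F hF))
  rw [simRank_eq, simRank_eq]
  refine Submodule.finrank_lt_finrank_of_lt (lt_of_le_of_ne (sp_mono hXY) ?_)
  intro h
  exact hFX (hflat F hFY (h ▸ bvec_mem_sp hFY))

lemma mem_pair_repr {F : Finset (Fin n)} {v : Fin n} (hF : F.card = 2) (hv : v ∈ F) :
    ∃ u, v ≠ u ∧ F = {v,u} := by
  obtain ⟨a, b, hab, rfl⟩ := Finset.card_eq_two.mp hF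
  rcases Finset.mem_insert.mp hv with rfl | hv'
  · exact ⟨b, hab, rfl⟩
  · rw [Finset.mem_singleton.mp hv']
    exact ⟨a, hab.symm, Finset.pair_comm a b⟩

lemma pair_ne {v u : Fin n} (h : ({v,u} : Finset (Fin n)).card = 2) : v ≠ u := by
  intro he; subst he; simp at h

lemma ovec_mem_iff {a b : Fin n} (hab : a ≠ b) {U : Submodule 𝔽 (Csets n (2-1) → 𝔽)} :
    ovec 𝔽 a b ∈ U ↔ bvec 𝔽 n 2 {a,b} ∈ U := by
  rcases bvec_pair' (𝔽 := 𝔽) hab with h | h <;> rw [h]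
  exact ⟨fun h' => U.neg_mem h', fun h' => by simpa using U.neg_mem h'⟩

lemma inc_singleton_cast_ne {v : Fin n} {F : Finset (Fin n)} (hF : F.card = 2) :
    ((inc {v} F : ℤ) : 𝔽) ≠ 0 ↔ v ∈ F := by
  have key : ∀ a b : Fin n, a < b →
      (((inc {v} ({a,b} : Finset (Fin n)) : ℤ) : 𝔽) ≠ 0 ↔ v ∈ ({a,b} : Finset (Fin n))) := by
    intro a b hab
    rw [inc_pair hab]
    have hne : a ≠ b := ne_of_lt hab
    by_cases hva : v = a
    · subst hva
      simp [Finset.singleton_inj, hne]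
    · by_cases hvb : v = b
      · subst hvb
        simp [Finset.singleton_inj, hne.symm, hva]
      · have h1 : ({v} : Finset (Fin n)) ≠ {a} := fun h => hva (Finset.singleton_inj.mp h)
        have h2 : ({v} : Finset (Fin n)) ≠ {b} := fun h => hvb (Finset.singleton_inj.mp h)
        simp [h1, h2, hva, hvb]
  obtain ⟨a, b, hab, rfl⟩ := Finset.card_eq_two.mp hF
  rcases lt_or_gt_of_ne hab with h | h
  · exact key a b h
  · rw [Finset.pair_comm]; exact key b a h

/-- The support of `δ{v}` on an edge set is exactly the star of `v`. -/
lemma suppδ_eq {Y : Finset (Finset (Fin n))} (h2 : ∀ e ∈ Y, e.card = 2) (v : Fin n) :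
    suppδ 𝔽 Y {v} = Y.filter (fun F => v ∈ F) := by
  ext F
  simp only [suppδ, suppFin, cobdry, Finset.mem_image, Finset.mem_filter,
    Finset.mem_attach, true_and, Subtype.exists, exists_and_right, exists_eq_right]
  constructor
  · rintro ⟨hFY, hne⟩
    exact ⟨hFY, (inc_singleton_cast_ne (h2 F hFY)).mp ((@Finset.mem_filter _ (fun a : Y => cobdry 𝔽 Y {v} a ≠ 0) (fun _ => @instDecidableNot _ (Classical.propDecidable _)) Y.attach _).mp hne).2⟩
  · rintro ⟨hFY, hv⟩
    exact ⟨hFY, (@Finset.mem_filter _ (fun a : Y => cobdry 𝔽 Y {v} a ≠ 0) (fun _ => @instDecidableNot _ (Classical.propDecidable _)) Y.attach _).mpr ⟨Finset.mem_attach _ _, (inc_singleton_cast_ne (h2 F hFY)).mpr hv⟩⟩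

lemma sdiff_suppδ {Y : Finset (Finset (Fin n))} (h2 : ∀ e ∈ Y, e.card = 2) (v : Fin n) :
    Y \ suppδ 𝔽 Y {v} = Y.filter (fun F => v ∉ F) := by
  rw [suppδ_eq h2 v, ← Finset.filter_not]

lemma simFlat_iff {S2 X : Finset (Finset (Fin n))} :
    SimFlat 𝔽 n 2 S2 X ↔ X ⊆ S2 ∧ ∀ F ∈ S2, bvec 𝔽 n 2 F ∈ sp 𝔽 X → F ∈ X :=
  Iff.rfl

lemma mem_simClosure_iff {S2 X : Finset (Finset (Fin n))} {F : Finset (Fin n)} :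
    F ∈ simClosure 𝔽 n 2 S2 X ↔ F ∈ S2 ∧ bvec 𝔽 n 2 F ∈ sp 𝔽 X := by
  simp [simClosure, sp]

lemma sp_simClosure {S2 X : Finset (Finset (Fin n))} (hX : X ⊆ S2) :
    sp 𝔽 (simClosure 𝔽 n 2 S2 X) = sp 𝔽 X := by
  apply le_antisymm
  · rw [sp_le_iff]
    intro F hF
    exact (mem_simClosure_iff.mp hF).2
  · apply sp_mono
    intro F hF
    exact mem_simClosure_iff.mpr ⟨hX hF, bvec_mem_sp hF⟩

lemma simClosure_empty {S2 : Finset (Finset (Fin n))} (h2 : ∀ e ∈ S2, e.card = 2) :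
    simClosure 𝔽 n 2 S2 (∅ : Finset (Finset (Fin n))) = ∅ := by
  rw [Finset.eq_empty_iff_forall_notMem]
  intro F hF
  obtain ⟨hFS, hsp⟩ := mem_simClosure_iff.mp hF
  rw [sp_empty, Submodule.mem_bot] at hsp
  exact bvec_ne_zero (h2 F hFS) hsp

/-- The span-theoretic criterion implies modularity. -/
lemma modular_of_spancrit {S2 X : Finset (Finset (Fin n))} (hX : SimFlat 𝔽 n 2 S2 X)
    (hcrit : ∀ Y, SimFlat 𝔽 n 2 S2 Y → sp 𝔽 X ⊓ sp 𝔽 Y ≤ sp 𝔽 (X ∩ Y)) :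
    ModularFlat 𝔽 n 2 S2 X := by
  refine ⟨hX, fun Y hY => ?_⟩
  have h1 : sp 𝔽 (X ∪ Y) = sp 𝔽 X ⊔ sp 𝔽 Y := sp_union X Y
  have h2 : sp 𝔽 (X ∩ Y) = sp 𝔽 X ⊓ sp 𝔽 Y := by
    apply le_antisymm
    · rw [sp_le_iff]
      intro F hF
      exact ⟨bvec_mem_sp (Finset.mem_of_mem_inter_left hF),
        bvec_mem_sp (Finset.mem_of_mem_inter_right hF)⟩
    · exact hcrit Y hY
  rw [simRank_eq, simRank_eq, simRank_eq, simRank_eq, h1, h2]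
  exact (Submodule.finrank_sup_add_finrank_inf_eq (sp 𝔽 X) (sp 𝔽 Y)).symm

/-- Every face is contained in a facet. -/
lemma face_le_facet {Y : Finset (Finset (Fin n))} {F : Finset (Fin n)} (hF : IsFace 2 Y F) :
    ∃ M, IsFacet 2 Y M ∧ F ⊆ M := by
  classical
  have hne : ((Finset.univ : Finset (Finset (Fin n))).filter
      (fun G => IsFace 2 Y G ∧ F ⊆ G)).Nonempty :=
    ⟨F, Finset.mem_filter.mpr ⟨Finset.mem_univ _, hF, Finset.Subset.refl F⟩⟩
  obtain ⟨M, hM, hmax⟩ := Finset.exists_max_image _ (fun G => G.card) hne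
  obtain ⟨-, hMface, hFM⟩ := Finset.mem_filter.mp hM
  refine ⟨M, ⟨hMface, fun G hGface hMG => ?_⟩, hFM⟩
  have hG : G ∈ (Finset.univ : Finset (Finset (Fin n))).filter
      (fun G => IsFace 2 Y G ∧ F ⊆ G) :=
    Finset.mem_filter.mpr ⟨Finset.mem_univ _, hGface, hFM.trans hMG⟩
  exact Finset.eq_of_subset_of_card_le hMG (hmax G hG)

lemma pair_isFace {Y : Finset (Finset (Fin n))} (h2 : ∀ e ∈ Y, e.card = 2)
    {v u : Fin n} (h : {v,u} ∈ Y) : IsFace 2 Y {v,u} := by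
  refine Or.inr (fun G hG hGcard => ?_)
  have : G = {v,u} := Finset.eq_of_subset_of_card_le hG (by rw [hGcard, h2 _ h])
  rwa [this]

/-- If `{v}` is simplicial, the neighbourhood of `v` is a clique. -/
lemma simplicial_clique {Y : Finset (Finset (Fin n))} (h2 : ∀ e ∈ Y, e.card = 2)
    {v : Fin n} (hsf : SimplicialFace 2 Y {v}) :
    ∀ u u', {v,u} ∈ Y → {v,u'} ∈ Y → u ≠ u' → {u,u'} ∈ Y := by
  obtain ⟨M, ⟨hMfacet, hvM⟩, huniq⟩ := hsf
  have key : ∀ u, {v,u} ∈ Y → u ∈ M := by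
    intro u hu
    have hvu : v ≠ u := pair_ne (h2 _ hu)
    obtain ⟨M', hM'facet, hsub⟩ := face_le_facet (pair_isFace h2 hu)
    have hsubv : ({v} : Finset (Fin n)) ⊆ M' := by
      intro x hx
      rw [Finset.mem_singleton.mp hx]
      exact hsub (Finset.mem_insert_self v {u})
    have hMM : M' = M := huniq M' ⟨hM'facet, (Finset.ssubset_iff_of_subset hsubv).mpr
      ⟨u, hsub (by simp), by simp [hvu.symm]⟩⟩
    rw [← hMM]
    exact hsub (by simp)
  intro u u' hu hu' huu'
  have hMface := hMfacet.1
  rcases hMface with hcard | hface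
  · exfalso
    have : ({v,u} : Finset (Fin n)).card ≤ M.card := by
      apply Finset.card_le_card
      intro x hx
      rcases Finset.mem_insert.mp hx with rfl | hx'
      · exact (subset_of_ssubset hvM) (by simp)
      · rw [Finset.mem_singleton.mp hx']; exact key u hu
    rw [h2 _ hu] at this
    omega
  · apply hface {u,u'}
    · intro x hx
      rcases Finset.mem_insert.mp hx with hx1 | hx'
      · rw [hx1]; exact key u hu
      · rw [Finset.mem_singleton.mp hx']; exact key u' hu'
    · exact Finset.card_pair huu'

/-- Spanning property of a star at a simplicial vertex. -/
lemma star_span {Z : Finset (Finset (Fin n))} (h2 : ∀ e ∈ Z, e.card = 2)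
    {v u0 : Fin n} (hf0 : {v,u0} ∈ Z)
    (hcl : ∀ u, {v,u} ∈ Z → u ≠ u0 → {u0,u} ∈ Z) :
    sp 𝔽 Z ≤ Submodule.span 𝔽 {bvec 𝔽 n 2 {v,u0}} ⊔ sp 𝔽 (Z.filter (fun e => v ∉ e)) := by
  have hvu0 : v ≠ u0 := pair_ne (h2 _ hf0)
  rw [sp_le_iff]
  intro F hF
  by_cases hvF : v ∈ F
  · obtain ⟨u, hvu, rfl⟩ := mem_pair_repr (h2 F hF) hvF
    rcases eq_or_ne u u0 with rfl | huu0
    · exact Submodule.mem_sup_left (Submodule.mem_span_singleton_self _)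
    · have hZ : {u0, u} ∈ Z.filter (fun e => v ∉ e) := by
        rw [Finset.mem_filter]
        refine ⟨hcl u hF huu0, ?_⟩
        intro hv
        rcases Finset.mem_insert.mp hv with rfl | hv'
        · exact hvu0 rfl
        · exact hvu (Finset.mem_singleton.mp hv')
      have hu0u : u0 ≠ u := by
        intro h; exact huu0 (h ▸ rfl)
      have m1 : ovec 𝔽 v u0 ∈ Submodule.span 𝔽 {bvec 𝔽 n 2 {v,u0}} ⊔
          sp 𝔽 (Z.filter (fun e => v ∉ e)) := by
        rw [ovec_mem_iff hvu0]
        exact Submodule.mem_sup_left (Submodule.mem_span_singleton_self _)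
      have m2 : ovec 𝔽 u0 u ∈ Submodule.span 𝔽 {bvec 𝔽 n 2 {v,u0}} ⊔
          sp 𝔽 (Z.filter (fun e => v ∉ e)) := by
        rw [ovec_mem_iff hu0u]
        exact Submodule.mem_sup_right (bvec_mem_sp hZ)
      have hsum := Submodule.add_mem _ m1 m2
      rw [ovec_cancel] at hsum
      rw [← ovec_mem_iff hvu]
      exact hsum
  · exact Submodule.mem_sup_right (bvec_mem_sp (Finset.mem_filter.mpr ⟨hF, hvF⟩))

/-- Removing the star of a simplicial vertex (with at least one edge) drops the rank
by exactly one. -/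
lemma star_rank {Z : Finset (Finset (Fin n))} (h2 : ∀ e ∈ Z, e.card = 2)
    {v u0 : Fin n} (hf0 : {v,u0} ∈ Z)
    (hcl : ∀ u, {v,u} ∈ Z → u ≠ u0 → {u0,u} ∈ Z) :
    simRank 𝔽 n 2 Z = simRank 𝔽 n 2 (Z.filter (fun e => v ∉ e)) + 1 := by
  have hsp : sp 𝔽 Z = Submodule.span 𝔽 {bvec 𝔽 n 2 {v,u0}} ⊔
      sp 𝔽 (Z.filter (fun e => v ∉ e)) := by
    apply le_antisymm (star_span h2 hf0 hcl)
    apply sup_le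
    · rw [Submodule.span_le, Set.singleton_subset_iff]
      exact bvec_mem_sp hf0
    · exact sp_mono (Finset.filter_subset _ _)
  have hnot : bvec 𝔽 n 2 {v,u0} ∉ sp 𝔽 (Z.filter (fun e => v ∉ e)) := by
    apply bvec_notin_sp
    · intro e he; exact h2 e (Finset.filter_subset _ _ he)
    · intro e he; exact (Finset.mem_filter.mp he).2
    · exact h2 _ hf0
    · exact Finset.mem_insert_self v {u0}
  rw [simRank_eq, simRank_eq, hsp]
  exact finrank_sup_singleton hnot

/-- The span-intersection (modularity) criterion for a dense hyperplane, within its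
ambient ground set. -/
lemma dense_hyp_crit {Y : Finset (Finset (Fin n))} (h2 : ∀ e ∈ Y, e.card = 2)
    {v : Fin n} (hclq : ∀ u u', {v,u} ∈ Y → {v,u'} ∈ Y → u ≠ u' → {u,u'} ∈ Y)
    {Z : Finset (Finset (Fin n))} (hZY : Z ⊆ Y)
    (hZflat : ∀ F ∈ Y, bvec 𝔽 n 2 F ∈ sp 𝔽 Z → F ∈ Z) :
    sp 𝔽 (Y.filter (fun e => v ∉ e)) ⊓ sp 𝔽 Z ≤ sp 𝔽 ((Y.filter (fun e => v ∉ e)) ∩ Z) := by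
  have h2Z : ∀ e ∈ Z, e.card = 2 := fun e he => h2 e (hZY he)
  have h2X : ∀ e ∈ Y.filter (fun e => v ∉ e), e.card = 2 :=
    fun e he => h2 e (Finset.filter_subset _ _ he)
  have hvX : ∀ e ∈ Y.filter (fun e => v ∉ e), v ∉ e := fun e he => (Finset.mem_filter.mp he).2
  rintro w ⟨hwX, hwZ⟩
  by_cases hstar : ∃ u0, {v,u0} ∈ Z
  · obtain ⟨u0, hf0⟩ := hstar
    have hvu0 : v ≠ u0 := pair_ne (h2Z _ hf0)
    -- the neighbourhood of v in Z is closed under joining to u0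
    have hcl : ∀ u, {v,u} ∈ Z → u ≠ u0 → {u0,u} ∈ Z := by
      intro u hu huu0
      have hvu : v ≠ u := pair_ne (h2Z _ hu)
      have hY' : {u0,u} ∈ Y := hclq u0 u (hZY hf0) (hZY hu) (fun h => huu0 h.symm)
      apply hZflat _ hY'
      rw [← ovec_mem_iff (fun h : u0 = u => huu0 h.symm)]
      have m1 : ovec 𝔽 u0 v ∈ sp 𝔽 Z := by
        rw [ovec_neg]
        exact (sp 𝔽 Z).neg_mem ((ovec_mem_iff hvu0).mpr (bvec_mem_sp hf0))
      have m2 : ovec 𝔽 v u ∈ sp 𝔽 Z := (ovec_mem_iff hvu).mpr (bvec_mem_sp hu)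
      have := Submodule.add_mem _ m1 m2
      rwa [ovec_cancel] at this
    have hsple := star_span (𝔽 := 𝔽) h2Z hf0 hcl
    obtain ⟨y, hy, z, hz, rfl⟩ := Submodule.mem_sup.mp (hsple hwZ)
    obtain ⟨c, rfl⟩ := Submodule.mem_span_singleton.mp hy
    have h2Zf : ∀ e ∈ Z.filter (fun e => v ∉ e), e.card = 2 :=
      fun e he => h2Z e (Finset.filter_subset _ _ he)
    have hvZf : ∀ e ∈ Z.filter (fun e => v ∉ e), v ∉ e :=
      fun e he => (Finset.mem_filter.mp he).2
    have hev0 : evc 𝔽 v (c • bvec 𝔽 n 2 {v,u0} + z) = 0 := evc_sp_zero h2X hvX hwX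
    have hevz : evc 𝔽 v z = 0 := evc_sp_zero h2Zf hvZf hz
    have hevf : evc 𝔽 v (bvec 𝔽 n 2 {v,u0}) ≠ 0 :=
      evc_bvec_mem (h2Z _ hf0) (Finset.mem_insert_self v {u0})
    have hc : c = 0 := by
      rw [map_add, map_smul, hevz, add_zero, smul_eq_mul] at hev0
      rcases mul_eq_zero.mp hev0 with h | h
      · exact h
      · exact absurd h hevf
    rw [hc, zero_smul, zero_add]
    apply sp_mono (Y := (Y.filter (fun e => v ∉ e)) ∩ Z) ?_ hz
    intro e he
    obtain ⟨heZ, hev⟩ := Finset.mem_filter.mp he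
    exact Finset.mem_inter.mpr ⟨Finset.mem_filter.mpr ⟨hZY heZ, hev⟩, heZ⟩
  · -- no edge of Z contains v, so Z ⊆ X and the claim is trivial
    push_neg at hstar
    have hZX : Z ⊆ (Y.filter (fun e => v ∉ e)) ∩ Z := by
      intro e he
      refine Finset.mem_inter.mpr ⟨Finset.mem_filter.mpr ⟨hZY he, ?_⟩, he⟩
      intro hv
      obtain ⟨u, hvu, rfl⟩ := mem_pair_repr (h2Z e he) hv
      exact hstar u he
    exact sp_mono hZX hwZ

/-- Transitivity: the modularity criterion for `X` inside the restriction to a modular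
flat `Y` extends to the full ground set. -/
lemma crit_trans {S2 X Y : Finset (Finset (Fin n))} (hXY : X ⊆ Y) (hYS2 : Y ⊆ S2)
    (hYcrit : ∀ Y', SimFlat 𝔽 n 2 S2 Y' → sp 𝔽 Y ⊓ sp 𝔽 Y' ≤ sp 𝔽 (Y ∩ Y'))
    (hXcritY : ∀ Z, Z ⊆ Y → (∀ F ∈ Y, bvec 𝔽 n 2 F ∈ sp 𝔽 Z → F ∈ Z) →
        sp 𝔽 X ⊓ sp 𝔽 Z ≤ sp 𝔽 (X ∩ Z)) :
    ∀ Y', SimFlat 𝔽 n 2 S2 Y' → sp 𝔽 X ⊓ sp 𝔽 Y' ≤ sp 𝔽 (X ∩ Y') := by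
  rintro Y' hY' w ⟨hwX, hwY'⟩
  have hZflat : ∀ F ∈ Y, bvec 𝔽 n 2 F ∈ sp 𝔽 (Y ∩ Y') → F ∈ Y ∩ Y' := by
    intro F hFY hsp
    have : bvec 𝔽 n 2 F ∈ sp 𝔽 Y' := sp_mono Finset.inter_subset_right hsp
    exact Finset.mem_inter.mpr ⟨hFY, hY'.2 F (hYS2 hFY) this⟩
  have hwZ : w ∈ sp 𝔽 (Y ∩ Y') :=
    hYcrit Y' hY' ⟨sp_mono hXY hwX, hwY'⟩
  have := hXcritY (Y ∩ Y') Finset.inter_subset_left hZflat ⟨hwX, hwZ⟩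
  have heq : X ∩ (Y ∩ Y') = X ∩ Y' := by
    rw [← Finset.inter_assoc, Finset.inter_eq_left.mpr hXY]
  rwa [heq] at this

/-- Superdense implies supersolvable. -/
theorem dir1 {S2 : Finset (Finset (Fin n))} (hS2 : ∀ F ∈ S2, F.card = 2)
    (h : Superdense 𝔽 n 2 S2) : Supersolvable 𝔽 n 2 S2 := by
  obtain ⟨X, hX0, hXr, hflat, hchain, hdh⟩ := h
  set r := simRank 𝔽 n 2 S2 with hr
  have key : ∀ d, ∀ Y', SimFlat 𝔽 n 2 S2 Y' →
      sp 𝔽 (X (r - d)) ⊓ sp 𝔽 Y' ≤ sp 𝔽 (X (r - d) ∩ Y') := by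
    intro d
    induction d with
    | zero =>
        intro Y' hY'
        rw [Nat.sub_zero, hXr]
        intro w hw
        have hYe : S2 ∩ Y' = Y' := Finset.inter_eq_right.mpr hY'.1
        rw [hYe]
        exact hw.2
    | succ d IH =>
        by_cases hd : d + 1 ≤ r
        · set i := r - (d + 1) with hidef
          have hi1 : i + 1 = r - d := by omega
          have hilt : i < r := by omega
          obtain ⟨⟨hXiflat1, hrank1⟩, V, hVcard, hVsimp, hXieq⟩ := hdh i hilt
          obtain ⟨v, rfl⟩ := Finset.card_eq_one.mp hVcard
          have h2Y : ∀ e ∈ X (i+1), e.card = 2 :=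
            fun e he => hS2 e ((hflat (i+1) (by omega)).1 he)
          have hXieq' : X i = (X (i+1)).filter (fun e => v ∉ e) := by
            rw [hXieq, sdiff_suppδ h2Y]
          have hclq := simplicial_clique h2Y hVsimp
          have hXY : X i ⊆ X (i+1) := by
            rw [hXieq']; exact Finset.filter_subset _ _
          have hYS2 : X (i+1) ⊆ S2 := (hflat (i+1) (by omega)).1
          have IH' : ∀ Y', SimFlat 𝔽 n 2 S2 Y' →
              sp 𝔽 (X (i+1)) ⊓ sp 𝔽 Y' ≤ sp 𝔽 (X (i+1) ∩ Y') := by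
            rw [hi1]; exact IH
          have hXcritY : ∀ Z, Z ⊆ X (i+1) →
              (∀ F ∈ X (i+1), bvec 𝔽 n 2 F ∈ sp 𝔽 Z → F ∈ Z) →
              sp 𝔽 (X i) ⊓ sp 𝔽 Z ≤ sp 𝔽 (X i ∩ Z) := by
            intro Z hZY hZflat
            rw [hXieq']
            exact dense_hyp_crit h2Y hclq hZY hZflat
          exact crit_trans hXY hYS2 IH' hXcritY
        · have heq : r - (d+1) = r - d := by omega
          rw [heq]; exact IH
  refine ⟨X, ?_, hXr, hchain, fun i hi => ?_⟩
  · rw [simClosure_empty hS2]; exact hX0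
  · have hcrit : ∀ Y', SimFlat 𝔽 n 2 S2 Y' →
        sp 𝔽 (X i) ⊓ sp 𝔽 Y' ≤ sp 𝔽 (X i ∩ Y') := by
      have hk := key (r - i)
      rw [Nat.sub_sub_self hi] at hk
      exact hk
    exact modular_of_spancrit (hflat i hi) hcrit

/-! ### Cycles -/

/-- Cyclic successor on `{0,…,m-1}`. -/
def nxt (m i : ℕ) : ℕ := if i + 1 = m then 0 else i + 1

lemma nxt_lt {m i : ℕ} (hm : 0 < m) (_ : i < m) : nxt m i < m := by
  unfold nxt; split <;> omega

lemma nxt_ne {m i : ℕ} (hm : 2 ≤ m) (hi : i < m) : nxt m i ≠ i := by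
  unfold nxt; split <;> omega

lemma nxt_inj {m i j : ℕ} (hi : i < m) (hj : j < m) (h : nxt m i = nxt m j) : i = j := by
  unfold nxt at h; split at h <;> split at h <;> omega

lemma nxt_nxt_ne {m i : ℕ} (hm : 3 ≤ m) (hi : i < m) : nxt m (nxt m i) ≠ i := by
  unfold nxt; split_ifs <;> omega

lemma nxt3_ne {m i : ℕ} (hm : 4 ≤ m) (hi : i < m) : nxt m (nxt m (nxt m i)) ≠ i := by
  unfold nxt; split_ifs <;> omega

/-- A (combinatorial, injectively parametrized) cycle in the graph `([n], S2)`. -/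
def IsCycle2 {n : ℕ} (S2 : Finset (Finset (Fin n))) (m : ℕ) (c : ℕ → Fin n) : Prop :=
  4 ≤ m ∧ (∀ i < m, ∀ j < m, c i = c j → i = j) ∧ ∀ i < m, {c i, c (nxt m i)} ∈ S2

/-- The cycle has no chord. -/
def Chordless {n : ℕ} (S2 : Finset (Finset (Fin n))) (m : ℕ) (c : ℕ → Fin n) : Prop :=
  ∀ i < m, ∀ j < m, ({c i, c j} : Finset (Fin n)) ∈ S2 →
    j = nxt m i ∨ i = nxt m j ∨ i = j

/-- The graph `([n], S2)` is chordal (no chordless cycle of length `≥ 4`). -/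
def NoCCycle {n : ℕ} (S2 : Finset (Finset (Fin n))) : Prop :=
  ∀ m c, IsCycle2 S2 m c → ¬ Chordless S2 m c

lemma ovec_self (a : Fin n) : ovec 𝔽 a a = 0 := by
  funext V; unfold ovec; rw [sub_self]; rfl

lemma telescope (c : ℕ → Fin n) :
    ∀ k, ∑ i ∈ Finset.range k, ovec 𝔽 (c i) (c (i+1)) = ovec 𝔽 (c 0) (c k) := by
  intro k
  induction k with
  | zero => rw [Finset.sum_range_zero, ovec_self]
  | succ k IH => rw [Finset.sum_range_succ, IH, ovec_cancel]

lemma cycle_sum {m : ℕ} (hm : 1 ≤ m) (c : ℕ → Fin n) :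
    ∑ i ∈ Finset.range m, ovec 𝔽 (c i) (c (nxt m i)) = 0 := by
  obtain ⟨k, rfl⟩ : ∃ k, m = k + 1 := ⟨m - 1, by omega⟩
  rw [Finset.sum_range_succ]
  have h1 : ∑ i ∈ Finset.range k, ovec 𝔽 (c i) (c (nxt (k+1) i)) =
      ∑ i ∈ Finset.range k, ovec 𝔽 (c i) (c (i+1)) := by
    apply Finset.sum_congr rfl
    intro i hi
    have : nxt (k+1) i = i + 1 := by
      unfold nxt
      rw [if_neg]
      have := Finset.mem_range.mp hi
      omega
    rw [this]
  have h2 : nxt (k+1) k = 0 := by unfold nxt; rw [if_pos rfl]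
  rw [h1, h2, telescope, ovec_cancel, ovec_self]

section Cycle

variable {S2 : Finset (Finset (Fin n))} {m : ℕ} {c : ℕ → Fin n}

lemma cyc_vne (hcyc : IsCycle2 S2 m c) {i j : ℕ} (hi : i < m) (hj : j < m) (hij : i ≠ j) :
    c i ≠ c j := fun h => hij (hcyc.2.1 i hi j hj h)

lemma cyc_edge_card (hcyc : IsCycle2 S2 m c) {i : ℕ} (hi : i < m) :
    ({c i, c (nxt m i)} : Finset (Fin n)).card = 2 := by
  have hm : 4 ≤ m := hcyc.1
  exact Finset.card_pair (cyc_vne hcyc hi (nxt_lt (by omega) hi)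
    (fun h => nxt_ne (by omega) hi h.symm))

lemma cyc_edge_inj (hcyc : IsCycle2 S2 m c) {i j : ℕ} (hi : i < m) (hj : j < m)
    (h : ({c i, c (nxt m i)} : Finset (Fin n)) = {c j, c (nxt m j)}) : i = j := by
  have hm : 4 ≤ m := hcyc.1
  have hinj := hcyc.2.1
  have h1 : c i ∈ ({c j, c (nxt m j)} : Finset (Fin n)) := h ▸ Finset.mem_insert_self _ _
  have h2 : c (nxt m i) ∈ ({c j, c (nxt m j)} : Finset (Fin n)) := by
    rw [← h]; simp
  rcases Finset.mem_insert.mp h1 with hij | hnj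
  · exact hinj i hi j hj hij
  · have hinxt : i = nxt m j :=
      hinj i hi (nxt m j) (nxt_lt (by omega) hj) (Finset.mem_singleton.mp hnj)
    rcases Finset.mem_insert.mp h2 with hc | hc
    · have : nxt m i = j := hinj _ (nxt_lt (by omega) hi) j hj hc
      exfalso
      apply nxt_nxt_ne (by omega : 3 ≤ m) hj
      rw [← hinxt, this]
    · have : nxt m i = nxt m j := hinj _ (nxt_lt (by omega) hi) _
        (nxt_lt (by omega) hj) (Finset.mem_singleton.mp hc)
      exact nxt_inj hi hj this

end Cycle

lemma nat_chain (f : ℕ → ℕ) (r : ℕ) (hstep : ∀ i < r, f i < f (i+1)) (h0 : f 0 = 0)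
    (hr : f r = r) : ∀ i ≤ r, f i = i := by
  have step2 : ∀ i j, i + j ≤ r → f i + j ≤ f (i + j) := by
    intro i j
    induction j with
    | zero => simp
    | succ j IH =>
        intro h
        have h1 := IH (by omega)
        have h2 := hstep (i+j) (by omega)
        have : i + (j+1) = (i + j) + 1 := by omega
        rw [this]
        omega
  intro i hi
  have hle := step2 i (r - i) (by omega)
  have hge := step2 0 i (by omega)
  rw [Nat.add_sub_cancel' hi] at hle
  rw [Nat.zero_add] at hge
  omega

lemma sp_pair (e f : Finset (Fin n)) :
    sp 𝔽 {e,f} = Submodule.span 𝔽 {bvec 𝔽 n 2 e, bvec 𝔽 n 2 f} := by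
  unfold sp
  rw [Finset.coe_insert, Finset.coe_singleton, Set.image_pair]

lemma sp_singleton (f : Finset (Fin n)) :
    sp 𝔽 {f} = Submodule.span 𝔽 {bvec 𝔽 n 2 f} := by
  unfold sp
  rw [Finset.coe_singleton, Set.image_singleton]

lemma sp_pair_mem {e f : Finset (Fin n)} {w : Csets n (2-1) → 𝔽} (hw : w ∈ sp 𝔽 {e,f}) :
    ∃ α β : 𝔽, w = α • bvec 𝔽 n 2 e + β • bvec 𝔽 n 2 f := by
  rw [sp_pair] at hw
  obtain ⟨a, b, h⟩ := Submodule.mem_span_pair.mp hw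
  exact ⟨a, b, h.symm⟩

lemma exists_mem_not_mem {e f : Finset (Fin n)} (hef : e ≠ f) (he : e.card = 2)
    (hf : f.card = 2) : ∃ u ∈ e, u ∉ f := by
  by_contra h
  push_neg at h
  exact hef (Finset.eq_of_subset_of_card_le h (by omega))

lemma rank_two_edges {e f : Finset (Fin n)} (hef : e ≠ f) (he : e.card = 2)
    (hf : f.card = 2) : simRank 𝔽 n 2 ({e,f} : Finset (Finset (Fin n))) = 2 := by
  obtain ⟨u, hue, huf⟩ := exists_mem_not_mem hef he hf
  have hnotin : bvec 𝔽 n 2 e ∉ sp 𝔽 ({f} : Finset (Finset (Fin n))) := by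
    apply bvec_notin_sp (v := u)
    · intro g hg; rw [Finset.mem_singleton.mp hg]; exact hf
    · intro g hg; rw [Finset.mem_singleton.mp hg]; exact huf
    · exact he
    · exact hue
  have h1 : ({e,f} : Finset (Finset (Fin n))) = insert e {f} := rfl
  rw [simRank_eq, h1, sp_insert, finrank_sup_singleton hnotin, sp_singleton,
    finrank_span_singleton (bvec_ne_zero hf)]

lemma simClosure_flat {S2 X : Finset (Finset (Fin n))} (hX : X ⊆ S2) :
    SimFlat 𝔽 n 2 S2 (simClosure 𝔽 n 2 S2 X) := by
  constructor
  · exact fun F hF => (mem_simClosure_iff.mp hF).1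
  · intro F hF hsp
    refine mem_simClosure_iff.mpr ⟨hF, ?_⟩
    rw [← sp_simClosure hX]
    exact hsp

lemma mem_of_evc_ne {g : Finset (Fin n)} (hg : g.card = 2) {u : Fin n}
    (h : evc 𝔽 u (bvec 𝔽 n 2 g) ≠ 0) : u ∈ g := by
  by_contra hu
  exact h (evc_bvec_notmem hg hu)

lemma eq_pair_of_mem {g : Finset (Fin n)} (hg : g.card = 2) {x y : Fin n}
    (hx : x ∈ g) (hy : y ∈ g) (hxy : x ≠ y) : g = {x,y} := by
  symm
  apply Finset.eq_of_subset_of_card_le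
  · intro t ht
    rcases Finset.mem_insert.mp ht with rfl | ht'
    · exact hx
    · rw [Finset.mem_singleton.mp ht']; exact hy
  · rw [hg, Finset.card_pair hxy]

lemma span_pair_shared {x y z : Fin n} (hxy : x ≠ y) (hyz : y ≠ z) (hxz : x ≠ z)
    {g : Finset (Fin n)} (hg : g.card = 2)
    (hsp : bvec 𝔽 n 2 g ∈ sp 𝔽 {({x,y} : Finset (Fin n)), {y,z}}) :
    g = {x,y} ∨ g = {y,z} ∨ g = {x,z} := by
  obtain ⟨α, β, heq⟩ := sp_pair_mem hsp
  have key : ∀ u, evc 𝔽 u (bvec 𝔽 n 2 g) =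
      α * evc 𝔽 u (bvec 𝔽 n 2 {x,y}) + β * evc 𝔽 u (bvec 𝔽 n 2 {y,z}) := by
    intro u
    rw [heq, map_add, map_smul, map_smul, smul_eq_mul, smul_eq_mul]
  have cxy : ({x,y} : Finset (Fin n)).card = 2 := Finset.card_pair hxy
  have cyz : ({y,z} : Finset (Fin n)).card = 2 := Finset.card_pair hyz
  have hxf : evc 𝔽 x (bvec 𝔽 n 2 ({y,z} : Finset (Fin n))) = 0 :=
    evc_bvec_notmem cyz (by simp [hxy, hxz])
  have hze : evc 𝔽 z (bvec 𝔽 n 2 ({x,y} : Finset (Fin n))) = 0 :=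
    evc_bvec_notmem cxy (by simp [hxz.symm, hyz.symm])
  have hex : evc 𝔽 x (bvec 𝔽 n 2 ({x,y} : Finset (Fin n))) ≠ 0 :=
    evc_bvec_mem cxy (by simp)
  have hey : evc 𝔽 y (bvec 𝔽 n 2 ({x,y} : Finset (Fin n))) ≠ 0 :=
    evc_bvec_mem cxy (by simp)
  have hey' : evc 𝔽 y (bvec 𝔽 n 2 ({y,z} : Finset (Fin n))) ≠ 0 :=
    evc_bvec_mem cyz (by simp)
  have hez' : evc 𝔽 z (bvec 𝔽 n 2 ({y,z} : Finset (Fin n))) ≠ 0 :=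
    evc_bvec_mem cyz (by simp)
  rcases eq_or_ne α 0 with rfl | hα
  · rcases eq_or_ne β 0 with rfl | hβ
    · exact absurd (by rw [heq, zero_smul, zero_smul, add_zero])
        (bvec_ne_zero (𝔽 := 𝔽) hg)
    · right; left
      have hyg : y ∈ g := mem_of_evc_ne (𝔽 := 𝔽) hg (by
        rw [key y, zero_mul, zero_add]
        exact mul_ne_zero hβ hey')
      have hzg : z ∈ g := mem_of_evc_ne (𝔽 := 𝔽) hg (by
        rw [key z, hze, mul_zero, zero_add]
        exact mul_ne_zero hβ hez')
      exact eq_pair_of_mem hg hyg hzg hyz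
  · rcases eq_or_ne β 0 with rfl | hβ
    · left
      have hxg : x ∈ g := mem_of_evc_ne (𝔽 := 𝔽) hg (by
        rw [key x, zero_mul, add_zero]
        exact mul_ne_zero hα hex)
      have hyg : y ∈ g := mem_of_evc_ne (𝔽 := 𝔽) hg (by
        rw [key y, zero_mul, add_zero]
        exact mul_ne_zero hα hey)
      exact eq_pair_of_mem hg hxg hyg hxy
    · right; right
      have hxg : x ∈ g := mem_of_evc_ne (𝔽 := 𝔽) hg (by
        rw [key x, hxf, mul_zero, add_zero]
        exact mul_ne_zero hα hex)
      have hzg : z ∈ g := mem_of_evc_ne (𝔽 := 𝔽) hg (by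
        rw [key z, hze, mul_zero, zero_add]
        exact mul_ne_zero hβ hez')
      exact eq_pair_of_mem hg hxg hzg hxz

lemma span_pair_disj {x y z w : Fin n} (hxy : x ≠ y) (hzw : z ≠ w) (hxz : x ≠ z)
    (hxw : x ≠ w) (hyz : y ≠ z) (hyw : y ≠ w) {g : Finset (Fin n)} (hg : g.card = 2)
    (hsp : bvec 𝔽 n 2 g ∈ sp 𝔽 {({x,y} : Finset (Fin n)), {z,w}}) :
    g = {x,y} ∨ g = {z,w} := by
  obtain ⟨α, β, heq⟩ := sp_pair_mem hsp
  have key : ∀ u, evc 𝔽 u (bvec 𝔽 n 2 g) =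
      α * evc 𝔽 u (bvec 𝔽 n 2 {x,y}) + β * evc 𝔽 u (bvec 𝔽 n 2 {z,w}) := by
    intro u
    rw [heq, map_add, map_smul, map_smul, smul_eq_mul, smul_eq_mul]
  have cxy : ({x,y} : Finset (Fin n)).card = 2 := Finset.card_pair hxy
  have czw : ({z,w} : Finset (Fin n)).card = 2 := Finset.card_pair hzw
  have hxf : evc 𝔽 x (bvec 𝔽 n 2 ({z,w} : Finset (Fin n))) = 0 :=
    evc_bvec_notmem czw (by simp [hxz, hxw])
  have hyf : evc 𝔽 y (bvec 𝔽 n 2 ({z,w} : Finset (Fin n))) = 0 :=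
    evc_bvec_notmem czw (by simp [hyz, hyw])
  have hex : evc 𝔽 x (bvec 𝔽 n 2 ({x,y} : Finset (Fin n))) ≠ 0 :=
    evc_bvec_mem cxy (by simp)
  have hey : evc 𝔽 y (bvec 𝔽 n 2 ({x,y} : Finset (Fin n))) ≠ 0 :=
    evc_bvec_mem cxy (by simp)
  have hez : evc 𝔽 z (bvec 𝔽 n 2 ({z,w} : Finset (Fin n))) ≠ 0 :=
    evc_bvec_mem czw (by simp)
  have hew : evc 𝔽 w (bvec 𝔽 n 2 ({z,w} : Finset (Fin n))) ≠ 0 :=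
    evc_bvec_mem czw (by simp)
  rcases eq_or_ne α 0 with rfl | hα
  · rcases eq_or_ne β 0 with rfl | hβ
    · exact absurd (by rw [heq, zero_smul, zero_smul, add_zero])
        (bvec_ne_zero (𝔽 := 𝔽) hg)
    · right
      have hzg : z ∈ g := mem_of_evc_ne (𝔽 := 𝔽) hg (by
        rw [key z, zero_mul, zero_add]
        exact mul_ne_zero hβ hez)
      have hwg : w ∈ g := mem_of_evc_ne (𝔽 := 𝔽) hg (by
        rw [key w, zero_mul, zero_add]
        exact mul_ne_zero hβ hew)
      exact eq_pair_of_mem hg hzg hwg hzw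
  · left
    have hxg : x ∈ g := mem_of_evc_ne (𝔽 := 𝔽) hg (by
      rw [key x, hxf, mul_zero, add_zero]
      exact mul_ne_zero hα hex)
    have hyg : y ∈ g := mem_of_evc_ne (𝔽 := 𝔽) hg (by
      rw [key y, hyf, mul_zero, add_zero]
      exact mul_ne_zero hα hey)
    exact eq_pair_of_mem hg hxg hyg hxy

section Stanley

variable {S2 : Finset (Finset (Fin n))} {m : ℕ} {c : ℕ → Fin n}

/-- Each edge of a cycle is in the span of the other edges. -/
lemma cyc_edge_span (hcyc : IsCycle2 S2 m c) {t : ℕ} (ht : t < m) :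
    bvec 𝔽 n 2 {c t, c (nxt m t)} ∈ sp 𝔽
      (((Finset.range m).image (fun i => ({c i, c (nxt m i)} : Finset (Fin n)))).erase
        {c t, c (nxt m t)}) := by
  have hm : 4 ≤ m := hcyc.1
  have hvne : ∀ i, i < m → c i ≠ c (nxt m i) := by
    intro i hi
    exact cyc_vne hcyc hi (nxt_lt (by omega) hi) (fun h => nxt_ne (by omega) hi h.symm)
  have hsum := cycle_sum (𝔽 := 𝔽) (by omega : 1 ≤ m) c
  have hsplit := Finset.sum_erase_add (Finset.range m)
    (fun i => ovec 𝔽 (c i) (c (nxt m i))) (Finset.mem_range.mpr ht)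
  rw [hsum] at hsplit
  have h1 : ovec 𝔽 (c t) (c (nxt m t)) =
      - ∑ i ∈ (Finset.range m).erase t, ovec 𝔽 (c i) (c (nxt m i)) :=
    (neg_eq_of_add_eq_zero_right hsplit).symm
  rw [← ovec_mem_iff (hvne t ht), h1]
  apply Submodule.neg_mem
  apply Submodule.sum_mem
  intro i hi
  obtain ⟨hit, hirange⟩ := Finset.mem_erase.mp hi
  have hilt : i < m := Finset.mem_range.mp hirange
  rw [ovec_mem_iff (hvne i hilt)]
  apply bvec_mem_sp
  rw [Finset.mem_erase]
  constructor
  · intro h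
    exact hit (cyc_edge_inj hcyc hilt ht h)
  · exact Finset.mem_image.mpr ⟨i, hirange, rfl⟩

/-- The contradiction at the heart of Stanley's argument. -/
lemma stanley_contra {S2 Xi Xi1 : Finset (Finset (Fin n))} (hS2 : ∀ F ∈ S2, F.card = 2)
    (hmod : ModularFlat 𝔽 n 2 S2 Xi) (hflat1 : SimFlat 𝔽 n 2 S2 Xi1)
    (hXisub : Xi ⊆ Xi1)
    (hrank : simRank 𝔽 n 2 Xi1 = simRank 𝔽 n 2 Xi + 1)
    {e f : Finset (Fin n)} (hef : e ≠ f) (heS : e ∈ Xi1) (hfS : f ∈ Xi1)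
    (heX : e ∉ Xi) (hfX : f ∉ Xi)
    (hthird : ∀ g ∈ S2, bvec 𝔽 n 2 g ∈ sp 𝔽 {e,f} → g = e ∨ g = f) : False := by
  have heS2 : e ∈ S2 := hflat1.1 heS
  have hfS2 : f ∈ S2 := hflat1.1 hfS
  have hefS2 : ({e,f} : Finset (Finset (Fin n))) ⊆ S2 := by
    intro g hg
    rcases Finset.mem_insert.mp hg with rfl | hg'
    · exact heS2
    · rw [Finset.mem_singleton.mp hg']; exact hfS2
  set Y := simClosure 𝔽 n 2 S2 {e,f} with hYdef
  have hYflat : SimFlat 𝔽 n 2 S2 Y := simClosure_flat hefS2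
  have hYeq : Y = {e,f} := by
    apply Finset.Subset.antisymm
    · intro g hg
      obtain ⟨hgS, hgsp⟩ := mem_simClosure_iff.mp hg
      rcases hthird g hgS hgsp with rfl | rfl
      · exact Finset.mem_insert_self _ _
      · simp
    · intro g hg
      exact mem_simClosure_iff.mpr ⟨hefS2 hg, bvec_mem_sp hg⟩
  have hXiY : Xi ∩ Y = ∅ := by
    rw [Finset.eq_empty_iff_forall_notMem]
    intro g hg
    obtain ⟨hgXi, hgY⟩ := Finset.mem_inter.mp hg
    rw [hYeq] at hgY
    rcases Finset.mem_insert.mp hgY with rfl | hg'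
    · exact heX hgXi
    · rw [Finset.mem_singleton.mp hg'] at hgXi; exact hfX hgXi
  have hrY : simRank 𝔽 n 2 Y = 2 := by
    rw [hYeq]; exact rank_two_edges hef (hS2 e heS2) (hS2 f hfS2)
  have hmodeq := hmod.2 Y hYflat
  rw [hXiY, hrY, simRank_empty, add_zero] at hmodeq
  have hYsub : Xi ∪ Y ⊆ Xi1 := by
    rw [hYeq]
    intro g hg
    rcases Finset.mem_union.mp hg with hg' | hg'
    · exact hXisub hg'
    · rcases Finset.mem_insert.mp hg' with rfl | hg''
      · exact heS
      · rw [Finset.mem_singleton.mp hg'']; exact hfS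
  have hle : simRank 𝔽 n 2 (Xi ∪ Y) ≤ simRank 𝔽 n 2 Xi1 := simRank_mono hYsub
  omega

/-- Supersolvable implies chordal. -/
theorem stanley {S2 : Finset (Finset (Fin n))} (hS2 : ∀ F ∈ S2, F.card = 2)
    (hss : Supersolvable 𝔽 n 2 S2) : NoCCycle S2 := by
  rintro m c hcyc hchord
  classical
  obtain ⟨X, hX0, hXr, hchain, hmod⟩ := hss
  set r := simRank 𝔽 n 2 S2 with hr
  have hm : 4 ≤ m := hcyc.1
  have hinj := hcyc.2.1
  have hedges := hcyc.2.2
  have hflat : ∀ i ≤ r, SimFlat 𝔽 n 2 S2 (X i) := fun i hi => (hmod i hi).1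
  have hsub : ∀ i < r, X i ⊆ X (i+1) := fun i hi => subset_of_ssubset (hchain i hi)
  have hrank0 : simRank 𝔽 n 2 (X 0) = 0 := by
    rw [hX0, simRank_eq, sp_simClosure (Finset.empty_subset _), sp_empty, finrank_bot]
  have hranks : ∀ i ≤ r, simRank 𝔽 n 2 (X i) = i := by
    apply nat_chain _ r ?_ hrank0 (by rw [hXr])
    intro i hi
    apply simRank_lt_of_flat (hsub i hi)
    · intro F hF hspF
      exact (hflat i (le_of_lt hi)).2 F ((hflat (i+1) hi).1 hF) hspF
    · exact (hchain i hi).ne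
  set CE : ℕ → Finset (Fin n) := fun i => {c i, c (nxt m i)} with hCEdef
  set C : Finset (Finset (Fin n)) := (Finset.range m).image CE with hCdef
  have hCS2 : C ⊆ S2 := by
    intro g hg
    obtain ⟨i, hi, rfl⟩ := Finset.mem_image.mp hg
    exact hedges i (Finset.mem_range.mp hi)
  have hCr : C ⊆ X r := hXr ▸ hCS2
  have hC0 : ¬ C ⊆ X 0 := by
    rw [hX0, simClosure_empty hS2]
    intro h
    exact absurd (h (Finset.mem_image.mpr ⟨0, Finset.mem_range.mpr (by omega), rfl⟩))
      (Finset.notMem_empty _)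
  obtain ⟨i, hilt, hnotsub, hyessub⟩ : ∃ i, i < r ∧ ¬ C ⊆ X i ∧ C ⊆ X (i+1) := by
    have hex : ∃ j, C ⊆ X j := ⟨r, hCr⟩
    set j := Nat.find hex with hj
    have hjspec : C ⊆ X j := Nat.find_spec hex
    have hjle : j ≤ r := Nat.find_le hCr
    have hjpos : 0 < j := by
      rcases Nat.eq_zero_or_pos j with h0 | h
      · exact absurd (h0 ▸ hjspec) hC0
      · exact h
    refine ⟨j - 1, by omega, Nat.find_min hex (by omega), ?_⟩
    have : j - 1 + 1 = j := by omega
    rw [this]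
    exact hjspec
  have hflati := hflat i (le_of_lt hilt)
  have hranki : simRank 𝔽 n 2 (X (i+1)) = simRank 𝔽 n 2 (X i) + 1 := by
    rw [hranks (i+1) hilt, hranks i (le_of_lt hilt)]
  obtain ⟨e, heD⟩ := Finset.not_subset.mp hnotsub
  obtain ⟨heC, heXi⟩ := heD
  -- is there another missing edge?
  by_cases hone : ∀ g ∈ C, g ∉ X i → g = e
  · -- only one missing edge: contradiction with flatness
    obtain ⟨p, hpr, hpe⟩ := Finset.mem_image.mp heC
    subst hpe
    have hplt : p < m := Finset.mem_range.mp hpr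
    have hspan := cyc_edge_span (𝔽 := 𝔽) hcyc hplt
    have hspan' : bvec 𝔽 n 2 (CE p) ∈ sp 𝔽 (C.erase (CE p)) := by
      rw [hCdef, hCEdef]
      exact hspan
    have hsubXi : (C.erase (CE p)) ⊆ X i := by
      intro g hg
      obtain ⟨hgne, hgC⟩ := Finset.mem_erase.mp hg
      by_contra hgXi
      exact hgne (hone g hgC hgXi)
    have hmem : bvec 𝔽 n 2 (CE p) ∈ sp 𝔽 (X i) := sp_mono hsubXi hspan'
    exact heXi (hflati.2 (CE p) (hCS2 heC) hmem)
  · push_neg at hone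
    obtain ⟨f, hfC, hfXi, hfe⟩ := hone
    obtain ⟨p, hpr, hpe⟩ := Finset.mem_image.mp heC
    obtain ⟨q, hqr, hqf⟩ := Finset.mem_image.mp hfC
    have hplt : p < m := Finset.mem_range.mp hpr
    have hqlt : q < m := Finset.mem_range.mp hqr
    have hpq : p ≠ q := by
      intro h; exact hfe (by rw [← hqf, ← h, hpe])
    have hnp := nxt_lt (by omega : 0 < m) hplt
    have hnq := nxt_lt (by omega : 0 < m) hqlt
    -- generic contradiction applier
    have contra : ∀ gth : ∀ g ∈ S2,
        bvec 𝔽 n 2 g ∈ sp 𝔽 {CE p, CE q} → g = CE p ∨ g = CE q, False := by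
      intro gth
      apply stanley_contra hS2 (hmod i (le_of_lt hilt)) (hflat (i+1) hilt)
        (hsub i hilt) hranki (hpe ▸ hqf ▸ hfe.symm : CE p ≠ CE q)
        (hyessub (hpe ▸ heC)) (hyessub (hqf ▸ hfC)) (hpe ▸ heXi) (hqf ▸ hfXi) gth
    have shared : ∀ p' q', p' < m → q' < m → p' ≠ q' → q' = nxt m p' →
        ∀ g ∈ S2, bvec 𝔽 n 2 g ∈ sp 𝔽 {CE p', CE q'} → g = CE p' ∨ g = CE q' := by
      intro p' q' hplt' hqlt' hpq' h1 g hgS2 hgsp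
      have hnq' := nxt_lt (by omega : 0 < m) hqlt'
      have hd1 : c p' ≠ c q' := cyc_vne hcyc hplt' hqlt' hpq'
      have hqnq : q' ≠ nxt m q' := fun h => nxt_ne (by omega) hqlt' h.symm
      have hpnq : p' ≠ nxt m q' := by
        intro h
        apply nxt_nxt_ne (by omega : 3 ≤ m) hplt'
        rw [← h1, ← h]
      have hd2 : c q' ≠ c (nxt m q') := cyc_vne hcyc hqlt' hnq' hqnq
      have hd3 : c p' ≠ c (nxt m q') := cyc_vne hcyc hplt' hnq' hpnq
      have hsp' : bvec 𝔽 n 2 g ∈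
          sp 𝔽 {({c p', c q'} : Finset (Fin n)), {c q', c (nxt m q')}} := by
        have hCEp : CE p' = ({c p', c q'} : Finset (Fin n)) := by rw [h1]
        have hCEq : CE q' = ({c q', c (nxt m q')} : Finset (Fin n)) := rfl
        rwa [hCEp, hCEq] at hgsp
      rcases span_pair_shared hd1 hd2 hd3 (hS2 g hgS2) hsp' with hge | hgf | hgt
      · left; rw [hge, h1]
      · right; rw [hgf]
      · exfalso
        rw [hgt] at hgS2
        rcases hchord p' hplt' (nxt m q') hnq' hgS2 with hc | hc | hc
        · exact hpq' (nxt_inj hqlt' hplt' hc).symm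
        · exact nxt3_ne hm hplt' (by rw [← h1]; exact hc.symm)
        · exact hpnq hc
    by_cases h1 : q = nxt m p
    · exact contra (shared p q hplt hqlt hpq h1)
    · by_cases h2 : p = nxt m q
      · apply contra
        intro g hgS2 hgsp
        have : sp 𝔽 {CE p, CE q} = sp 𝔽 {CE q, CE p} := by
          rw [Finset.pair_comm]
        rw [this] at hgsp
        exact (shared q p hqlt hplt (Ne.symm hpq) h2 g hgS2 hgsp).symm
      · -- disjoint edges
        apply contra
        intro g hgS2 hgsp
        have hnenn : nxt m p ≠ nxt m q := fun h => hpq (nxt_inj hplt hqlt h)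
        have hpnp : p ≠ nxt m p := fun h => nxt_ne (by omega) hplt h.symm
        have hqnq : q ≠ nxt m q := fun h => nxt_ne (by omega) hqlt h.symm
        have hnpq : nxt m p ≠ q := fun h => h1 h.symm
        have hxy : c p ≠ c (nxt m p) := cyc_vne hcyc hplt hnp hpnp
        have hzw : c q ≠ c (nxt m q) := cyc_vne hcyc hqlt hnq hqnq
        have hxz : c p ≠ c q := cyc_vne hcyc hplt hqlt hpq
        have hxw : c p ≠ c (nxt m q) := cyc_vne hcyc hplt hnq h2
        have hyz : c (nxt m p) ≠ c q := cyc_vne hcyc hnp hqlt hnpq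
        have hyw : c (nxt m p) ≠ c (nxt m q) := cyc_vne hcyc hnp hnq hnenn
        have hsp' : bvec 𝔽 n 2 g ∈
            sp 𝔽 {({c p, c (nxt m p)} : Finset (Fin n)), {c q, c (nxt m q)}} := hgsp
        rcases span_pair_disj hxy hzw hxz hxw hyz hyw (hS2 g hgS2) hsp' with hge | hgf
        · left; exact hge
        · right; exact hgf

end Stanley

/-! ### Reachability inside a vertex set -/

/-- `Reach S2 W x y`: there is a walk from `x` to `y` all of whose vertices lie in `W`
and whose edges lie in `S2`. -/
def Reach {n : ℕ} (S2 : Finset (Finset (Fin n))) (W : Finset (Fin n)) (x y : Fin n) : Prop :=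
  ∃ (L : ℕ) (p : ℕ → Fin n), p 0 = x ∧ p L = y ∧
    (∀ i < L, ({p i, p (i+1)} : Finset (Fin n)) ∈ S2) ∧ (∀ i ≤ L, p i ∈ W)

section Reach

variable {S2 : Finset (Finset (Fin n))} {W : Finset (Fin n)}

lemma reach_refl {x : Fin n} (hx : x ∈ W) : Reach S2 W x x :=
  ⟨0, fun _ => x, rfl, rfl, fun i hi => absurd hi (by omega), fun _ _ => hx⟩

lemma reach_mem_left {x y : Fin n} (h : Reach S2 W x y) : x ∈ W := by
  obtain ⟨L, p, h0, hL, _, hmem⟩ := h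
  rw [← h0]; exact hmem 0 (by omega)

lemma reach_mem_right {x y : Fin n} (h : Reach S2 W x y) : y ∈ W := by
  obtain ⟨L, p, h0, hL, _, hmem⟩ := h
  rw [← hL]; exact hmem L (le_refl _)

lemma reach_symm {x y : Fin n} (h : Reach S2 W x y) : Reach S2 W y x := by
  obtain ⟨L, p, h0, hL, hedge, hmem⟩ := h
  refine ⟨L, fun i => p (L - i), ?_, ?_, ?_, fun i hi => hmem (L - i) (by omega)⟩
  · show p (L - 0) = y
    rw [Nat.sub_zero, hL]
  · show p (L - L) = x
    rw [Nat.sub_self, h0]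
  · intro i hi
    show ({p (L - i), p (L - (i+1))} : Finset (Fin n)) ∈ S2
    have h1 : L - i = (L - (i+1)) + 1 := by omega
    rw [h1, Finset.pair_comm]
    exact hedge (L - (i+1)) (by omega)

lemma reach_trans {x y z : Fin n} (h1 : Reach S2 W x y) (h2 : Reach S2 W y z) :
    Reach S2 W x z := by
  obtain ⟨L1, p, hp0, hpL, hpe, hpm⟩ := h1
  obtain ⟨L2, q, hq0, hqL, hqe, hqm⟩ := h2
  refine ⟨L1 + L2, fun i => if i ≤ L1 then p i else q (i - L1), ?_, ?_, ?_, ?_⟩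
  · show (if 0 ≤ L1 then p 0 else q (0 - L1)) = x
    rw [if_pos (by omega), hp0]
  · show (if L1 + L2 ≤ L1 then p (L1 + L2) else q (L1 + L2 - L1)) = z
    by_cases h : L2 = 0
    · subst h
      rw [if_pos (by omega), Nat.add_zero, hpL, ← hqL, ← hq0]
    · rw [if_neg (by omega)]
      have h1 : L1 + L2 - L1 = L2 := by omega
      rw [h1, hqL]
  · intro i hi
    show ({(if i ≤ L1 then p i else q (i - L1)),
      (if i + 1 ≤ L1 then p (i+1) else q (i + 1 - L1))} : Finset (Fin n)) ∈ S2
    by_cases hiL : i + 1 ≤ L1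
    · rw [if_pos (by omega), if_pos hiL]
      exact hpe i (by omega)
    · by_cases hie : i ≤ L1
      · have hieq : i = L1 := by omega
        subst hieq
        rw [if_pos (le_refl _), if_neg hiL, hpL, ← hq0]
        have h1 : i + 1 - i = 1 := by omega
        rw [h1]
        exact hqe 0 (by omega)
      · rw [if_neg hie, if_neg (by omega)]
        have h1 : i + 1 - L1 = (i - L1) + 1 := by omega
        rw [h1]
        exact hqe (i - L1) (by omega)
  · intro i hi
    show (if i ≤ L1 then p i else q (i - L1)) ∈ W
    by_cases hie : i ≤ L1
    · rw [if_pos hie]; exact hpm i hie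
    · rw [if_neg hie]; exact hqm (i - L1) (by omega)

lemma reach_step {x y z : Fin n} (h : Reach S2 W x y)
    (he : ({y, z} : Finset (Fin n)) ∈ S2) (hz : z ∈ W) : Reach S2 W x z := by
  refine reach_trans h ⟨1, fun i => if i = 0 then y else z, rfl, rfl, ?_, ?_⟩
  · intro i hi
    have : i = 0 := by omega
    subst this
    simpa using he
  · intro i hi
    by_cases h0 : i = 0
    · subst h0; simpa using reach_mem_right h
    · simp [h0, hz]

lemma reach_mono {W' : Finset (Fin n)} (hWW : W ⊆ W') {x y : Fin n}
    (h : Reach S2 W x y) : Reach S2 W' x y := by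
  obtain ⟨L, p, h0, hL, he, hm⟩ := h
  exact ⟨L, p, h0, hL, he, fun i hi => hWW (hm i hi)⟩

/-- Prefix of a walk: every vertex on a walk starting at a reachable vertex is reachable. -/
lemma reach_prefix {a : Fin n} {L : ℕ} {p : ℕ → Fin n}
    (hedge : ∀ i < L, ({p i, p (i+1)} : Finset (Fin n)) ∈ S2) (hmem : ∀ i ≤ L, p i ∈ W)
    (ha : Reach S2 W a (p 0)) : ∀ j ≤ L, Reach S2 W a (p j) := by
  intro j
  induction j with
  | zero => intro _; exact ha
  | succ j IH =>
      intro hj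
      exact reach_step (IH (by omega)) (hedge j (by omega)) (hmem (j+1) hj)

/-- If `a` can reach `b` with the help of the single extra vertex `s`, but not inside `W`,
then some vertex reachable from `a` in `W` is adjacent to `s` — or `a` is. -/
lemma reach_escape {s a b : Fin n} (h' : Reach S2 (insert s W) a b)
    (hnab : ¬ Reach S2 W a b) (ha : a ∈ W) :
    ∃ u, u ∈ W ∧ Reach S2 W a u ∧ ({u, s} : Finset (Fin n)) ∈ S2 := by
  obtain ⟨L, p, h0, hL, hedge, hmem⟩ := h'
  have main : ∀ j ≤ L, (∃ u, u ∈ W ∧ Reach S2 W a u ∧ ({u, s} : Finset (Fin n)) ∈ S2) ∨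
      Reach S2 W a (p j) := by
    intro j
    induction j with
    | zero => intro _; right; rw [h0]; exact reach_refl ha
    | succ j IH =>
        intro hj
        rcases IH (by omega) with hfound | hreach
        · exact Or.inl hfound
        · rcases Finset.mem_insert.mp (hmem (j+1) hj) with hs | hW
          · left
            exact ⟨p j, reach_mem_right hreach, hreach, hs ▸ hedge j (by omega)⟩
          · right
            exact reach_step hreach (hedge j (by omega)) hW
  rcases main L (le_refl _) with hfound | hreach
  · exact hfound
  · rw [hL] at hreach
    exact absurd hreach hnab

end Reach

/-- Existence of a minimal (hence induced) path from `s` to `t` through the component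
of `a` in `W`. -/
lemma min_path {S2 : Finset (Finset (Fin n))} {W : Finset (Fin n)} {a s t : Fin n}
    (hst : s ≠ t) (hnadj : ({s,t} : Finset (Fin n)) ∉ S2)
    (hus : ∃ u, Reach S2 W a u ∧ ({u, s} : Finset (Fin n)) ∈ S2)
    (hut : ∃ u, Reach S2 W a u ∧ ({u, t} : Finset (Fin n)) ∈ S2) :
    ∃ (L : ℕ) (p : ℕ → Fin n), 2 ≤ L ∧ p 0 = s ∧ p L = t ∧
      (∀ i < L, ({p i, p (i+1)} : Finset (Fin n)) ∈ S2) ∧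
      (∀ i, 0 < i → i < L → Reach S2 W a (p i)) ∧
      (∀ i j, i < j → j ≤ L → p i ≠ p j) ∧
      (∀ i j, i + 1 < j → j ≤ L → ({p i, p j} : Finset (Fin n)) ∉ S2) := by
  classical
  obtain ⟨us, husR, husS⟩ := hus
  obtain ⟨ut, hutR, hutS⟩ := hut
  set Q : ℕ → Prop := fun L => ∃ p : ℕ → Fin n, p 0 = s ∧ p L = t ∧
    (∀ i < L, ({p i, p (i+1)} : Finset (Fin n)) ∈ S2) ∧
    (∀ i, 0 < i → i < L → Reach S2 W a (p i)) with hQdef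
  have hQex : ∃ L, Q L := by
    obtain ⟨L, q, hq0, hqL, hqe, hqm⟩ := reach_trans (reach_symm husR) hutR
    have hreachq : ∀ j ≤ L, Reach S2 W a (q j) :=
      reach_prefix hqe hqm (by rw [hq0]; exact husR)
    refine ⟨L + 2, fun i => if i = 0 then s else if i ≤ L + 1 then q (i - 1) else t,
      ?_, ?_, ?_, ?_⟩
    · show (if (0:ℕ) = 0 then s else _) = s
      rw [if_pos rfl]
    · show (if L + 2 = 0 then s else if L + 2 ≤ L + 1 then q (L + 2 - 1) else t) = t
      rw [if_neg (by omega), if_neg (by omega)]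
    · intro i hi
      show ({(if i = 0 then s else if i ≤ L + 1 then q (i - 1) else t),
        (if i + 1 = 0 then s else if i + 1 ≤ L + 1 then q (i + 1 - 1) else t)} :
          Finset (Fin n)) ∈ S2
      rw [if_neg (by omega : ¬ i + 1 = 0)]
      by_cases h0 : i = 0
      · subst h0
        rw [if_pos rfl, if_pos (by omega)]
        show ({s, q 0} : Finset (Fin n)) ∈ S2
        rw [hq0, Finset.pair_comm]
        exact husS
      · rw [if_neg h0]
        by_cases h1 : i + 1 ≤ L + 1
        · rw [if_pos (by omega), if_pos h1]
          have e1 : i + 1 - 1 = (i - 1) + 1 := by omega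
          rw [e1]
          exact hqe (i - 1) (by omega)
        · have hieq : i = L + 1 := by omega
          subst hieq
          rw [if_pos (le_refl _), if_neg h1]
          have e1 : L + 1 - 1 = L := by omega
          rw [e1, hqL]
          exact hutS
    · intro i h0 hiL
      show Reach S2 W a (if i = 0 then s else if i ≤ L + 1 then q (i - 1) else t)
      rw [if_neg (by omega), if_pos (by omega)]
      exact hreachq (i - 1) (by omega)
  have hdec : DecidablePred Q := fun _ => Classical.propDecidable _
  set L0 := @Nat.find Q hdec hQex with hL0def
  obtain ⟨p, hp0, hpL, hpe, hpi⟩ : Q L0 := Nat.find_spec hQex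
  have hmin : ∀ k, k < L0 → ¬ Q k := fun k hk => Nat.find_min hQex hk
  have hL0ne0 : L0 ≠ 0 := by
    intro h
    exact hst (by rw [← hp0, ← hpL, h])
  have hL0ne1 : L0 ≠ 1 := by
    intro h
    apply hnadj
    have h2 := hpe 0 (by omega)
    have e : (0:ℕ)+1 = L0 := by omega
    rw [hp0, e, hpL] at h2
    exact h2
  have hL2 : 2 ≤ L0 := by omega
  -- no chords
  have hnochord : ∀ i j, i + 1 < j → j ≤ L0 → ({p i, p j} : Finset (Fin n)) ∉ S2 := by
    intro i j hij hjL hadj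
    set d := j - i - 1 with hd
    have hd1 : 1 ≤ d := by omega
    apply hmin (L0 - d) (by omega)
    refine ⟨fun k => if k ≤ i then p k else p (k + d), ?_, ?_, ?_, ?_⟩
    · show (if (0:ℕ) ≤ i then p 0 else p (0 + d)) = s
      rw [if_pos (by omega), hp0]
    · show (if L0 - d ≤ i then p (L0 - d) else p (L0 - d + d)) = t
      rw [if_neg (by omega)]
      have e1 : L0 - d + d = L0 := by omega
      rw [e1, hpL]
    · intro k hk
      show ({(if k ≤ i then p k else p (k + d)),
        (if k + 1 ≤ i then p (k+1) else p (k + 1 + d))} : Finset (Fin n)) ∈ S2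
      by_cases h1 : k + 1 ≤ i
      · rw [if_pos (by omega), if_pos h1]
        exact hpe k (by omega)
      · by_cases h2 : k ≤ i
        · have hkeq : k = i := by omega
          subst hkeq
          rw [if_pos (le_refl _), if_neg h1]
          have e1 : k + 1 + d = j := by omega
          rw [e1]
          exact hadj
        · rw [if_neg h2, if_neg (by omega)]
          have e1 : k + 1 + d = (k + d) + 1 := by omega
          rw [e1]
          exact hpe (k + d) (by omega)
    · intro k h0 hkL
      show Reach S2 W a (if k ≤ i then p k else p (k + d))
      by_cases h2 : k ≤ i
      · rw [if_pos h2]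
        exact hpi k h0 (by omega)
      · rw [if_neg h2]
        exact hpi (k + d) (by omega) (by omega)
  -- injectivity
  have hinj : ∀ i j, i < j → j ≤ L0 → p i ≠ p j := by
    intro i j hij hjL heqp
    set d := j - i with hd
    have hd1 : 1 ≤ d := by omega
    apply hmin (L0 - d) (by omega)
    refine ⟨fun k => if k < i then p k else p (k + d), ?_, ?_, ?_, ?_⟩
    · show (if (0:ℕ) < i then p 0 else p (0 + d)) = s
      by_cases h0 : 0 < i
      · rw [if_pos h0, hp0]
      · rw [if_neg h0]
        have hi0 : i = 0 := by omega
        have e1 : 0 + d = j := by omega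
        rw [e1, ← heqp, hi0, hp0]
    · show (if L0 - d < i then p (L0 - d) else p (L0 - d + d)) = t
      rw [if_neg (by omega)]
      have e1 : L0 - d + d = L0 := by omega
      rw [e1, hpL]
    · intro k hk
      show ({(if k < i then p k else p (k + d)),
        (if k + 1 < i then p (k+1) else p (k + 1 + d))} : Finset (Fin n)) ∈ S2
      by_cases h1 : k + 1 < i
      · rw [if_pos (by omega), if_pos h1]
        exact hpe k (by omega)
      · by_cases h2 : k < i
        · have hkeq : k + 1 = i := by omega
          rw [if_pos h2, if_neg h1]
          have e1 : k + 1 + d = j := by omega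
          rw [e1, ← heqp, ← hkeq]
          exact hpe k (by omega)
        · rw [if_neg h2, if_neg (by omega)]
          have e1 : k + 1 + d = (k + d) + 1 := by omega
          rw [e1]
          exact hpe (k + d) (by omega)
    · intro k h0 hkL
      show Reach S2 W a (if k < i then p k else p (k + d))
      by_cases h2 : k < i
      · rw [if_pos h2]
        exact hpi k h0 (by omega)
      · rw [if_neg h2]
        exact hpi (k + d) (by omega) (by omega)
  exact ⟨L0, p, hL2, hp0, hpL, hpe, hpi, hinj, hnochord⟩

/-- Gluing two induced paths through different components produces a chordless cycle:
contradiction with chordality. -/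
lemma glue_contra {S2 : Finset (Finset (Fin n))} (hch : NoCCycle S2) {W : Finset (Fin n)}
    {a b s t : Fin n} (hab : ¬ Reach S2 W a b) (hsW : s ∉ W) (htW : t ∉ W)
    {La : ℕ} {p : ℕ → Fin n} (hLa : 2 ≤ La) (hp0 : p 0 = s) (hpL : p La = t)
    (hpe : ∀ i < La, ({p i, p (i+1)} : Finset (Fin n)) ∈ S2)
    (hpi : ∀ i, 0 < i → i < La → Reach S2 W a (p i))
    (hpinj : ∀ i j, i < j → j ≤ La → p i ≠ p j)
    (hpnc : ∀ i j, i + 1 < j → j ≤ La → ({p i, p j} : Finset (Fin n)) ∉ S2)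
    {Lb : ℕ} {q : ℕ → Fin n} (hLb : 2 ≤ Lb) (hq0 : q 0 = t) (hqL : q Lb = s)
    (hqe : ∀ i < Lb, ({q i, q (i+1)} : Finset (Fin n)) ∈ S2)
    (hqi : ∀ i, 0 < i → i < Lb → Reach S2 W b (q i))
    (hqinj : ∀ i j, i < j → j ≤ Lb → q i ≠ q j)
    (hqnc : ∀ i j, i + 1 < j → j ≤ Lb → ({q i, q j} : Finset (Fin n)) ∉ S2) : False := by
  set m := La + Lb with hm
  have hm4 : 4 ≤ m := by omega
  set c : ℕ → Fin n := fun i => if i ≤ La then p i else q (i - La) with hc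
  have hcp : ∀ i, i ≤ La → c i = p i := by
    intro i hi
    show (if i ≤ La then p i else q (i - La)) = p i
    rw [if_pos hi]
  have hcq : ∀ i, La < i → c i = q (i - La) := by
    intro i hi
    show (if i ≤ La then p i else q (i - La)) = q (i - La)
    rw [if_neg (by omega)]
  have hcq' : c La = q 0 := by
    rw [hcp La (le_refl _), hpL, ← hq0]
  -- no vertex is reachable from both a and b
  have hnoboth : ∀ u v, Reach S2 W a u → Reach S2 W b v → u ≠ v := by
    intro u v h1 h2 he
    subst he
    exact hab (reach_trans h1 (reach_symm h2))
  -- no edge between the two components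
  have hnoedge : ∀ u v, Reach S2 W a u → Reach S2 W b v →
      ({u, v} : Finset (Fin n)) ∉ S2 := by
    intro u v h1 h2 hadj
    exact hab (reach_trans (reach_step h1 hadj (reach_mem_right h2))
      (reach_symm h2))
  -- injectivity
  have hinj2 : ∀ i j, i ≤ j → j < m → c i = c j → i = j := by
    intro i j hij hjm hcc
    by_contra hne
    have hij' : i < j := by omega
    by_cases hja : j ≤ La
    · rw [hcp i (by omega), hcp j hja] at hcc
      exact hpinj i j hij' hja hcc
    · by_cases hia : i ≤ La
      · rw [hcp i hia, hcq j (by omega)] at hcc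
        have hqint : 0 < j - La ∧ j - La < Lb := by omega
        have hqw : q (j - La) ∈ W := reach_mem_right (hqi (j - La) hqint.1 hqint.2)
        rcases Nat.lt_or_ge 0 i with hi0 | hi0
        · by_cases hiLa : i < La
          · exact hnoboth _ _ (hpi i hi0 hiLa) (hqi (j - La) hqint.1 hqint.2) hcc
          · have : i = La := by omega
            subst this
            rw [hpL] at hcc
            exact htW (hcc ▸ hqw)
        · have : i = 0 := by omega
          subst this
          rw [hp0] at hcc
          exact hsW (hcc ▸ hqw)
      · rw [hcq i (by omega), hcq j (by omega)] at hcc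
        exact hqinj (i - La) (j - La) (by omega) (by omega) hcc
  have hinj : ∀ i < m, ∀ j < m, c i = c j → i = j := by
    intro i hi j hj hcc
    rcases le_or_gt i j with h | h
    · exact hinj2 i j h hj hcc
    · exact (hinj2 j i (by omega) hi hcc.symm).symm
  -- edges
  have hedges : ∀ i < m, ({c i, c (nxt m i)} : Finset (Fin n)) ∈ S2 := by
    intro i hi
    by_cases hiL : i < La
    · have hnxt : nxt m i = i + 1 := by unfold nxt; rw [if_neg (by omega)]
      rw [hnxt, hcp i (by omega), hcp (i+1) (by omega)]
      exact hpe i hiL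
    · by_cases him : i + 1 < m
      · have hnxt : nxt m i = i + 1 := by unfold nxt; rw [if_neg (by omega)]
        rw [hnxt]
        by_cases hieq : i = La
        · subst hieq
          rw [hcq', hcq (i+1) (by omega)]
          have e1 : i + 1 - i = 1 := by omega
          rw [e1]
          exact hqe 0 (by omega)
        · rw [hcq i (by omega), hcq (i+1) (by omega)]
          have e1 : i + 1 - La = (i - La) + 1 := by omega
          rw [e1]
          exact hqe (i - La) (by omega)
      · have hieq : i = m - 1 := by omega
        subst hieq
        have hnxt : nxt m (m - 1) = 0 := by unfold nxt; rw [if_pos (by omega)]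
        rw [hnxt, hcq (m-1) (by omega), hcp 0 (by omega), hp0, ← hqL]
        have e1 : m - 1 - La = Lb - 1 := by omega
        rw [e1]
        have e2 : Lb = (Lb - 1) + 1 := by omega
        rw [e2]
        exact hqe (Lb - 1) (by omega)
  -- chordlessness
  have hchordless2 : ∀ i j, i ≤ j → j < m → ({c i, c j} : Finset (Fin n)) ∈ S2 →
      j = nxt m i ∨ i = nxt m j ∨ i = j := by
    intro i j hij hjm hadj
    by_contra hcon
    push_neg at hcon
    obtain ⟨hn1, hn2, hn3⟩ := hcon
    have hij' : i < j := by omega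
    by_cases hja : j ≤ La
    · rw [hcp i (by omega), hcp j hja] at hadj
      by_cases hcons : j = i + 1
      · apply hn1
        unfold nxt
        rw [if_neg (by omega)]
        omega
      · exact hpnc i j (by omega) hja hadj
    · by_cases hia : i ≤ La
      · rw [hcp i hia, hcq j (by omega)] at hadj
        have hqint : 0 < j - La ∧ j - La < Lb := by omega
        rcases Nat.lt_or_ge 0 i with hi0 | hi0
        · by_cases hiLa : i < La
          · exact hnoedge _ _ (hpi i hi0 hiLa) (hqi (j - La) hqint.1 hqint.2) hadj
          · -- i = La : c i = t = q 0
            have hieq : i = La := by omega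
            rw [hieq, hpL, ← hq0] at hadj
            by_cases hcons : j = i + 1
            · apply hn1
              unfold nxt
              rw [if_neg (by omega)]
              omega
            · refine hqnc 0 (j - La) (by omega) (by omega) hadj
        · -- i = 0 : c i = s = q Lb
          have hieq : i = 0 := by omega
          rw [hieq, hp0, ← hqL, Finset.pair_comm] at hadj
          by_cases hlast : j = m - 1
          · apply hn2
            subst hlast
            unfold nxt
            rw [if_pos (by omega)]
            exact hieq
          · refine hqnc (j - La) Lb (by omega) (le_refl _) hadj
      · rw [hcq i (by omega), hcq j (by omega)] at hadj
        by_cases hcons : j = i + 1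
        · apply hn1
          unfold nxt
          rw [if_neg (by omega)]
          omega
        · exact hqnc (i - La) (j - La) (by omega) (by omega) hadj
  have hchordless : Chordless S2 m c := by
    intro i hi j hj hadj
    rcases le_or_gt i j with h | h
    · exact hchordless2 i j h hj hadj
    · rw [Finset.pair_comm] at hadj
      rcases hchordless2 j i (by omega) hi hadj with h' | h' | h'
      · exact Or.inr (Or.inl h')
      · exact Or.inl h'
      · exact Or.inr (Or.inr h'.symm)
  exact hch m c ⟨hm4, hinj, hedges⟩ hchordless

/-- `x` is simplicial for `S2` within the vertex set `A`. -/
def SimpIn {n : ℕ} (S2 : Finset (Finset (Fin n))) (A : Finset (Fin n)) (x : Fin n) : Prop :=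
  ∀ u ∈ A, ∀ u' ∈ A, ({x,u} : Finset (Fin n)) ∈ S2 → ({x,u'} : Finset (Fin n)) ∈ S2 →
    u ≠ u' → ({u,u'} : Finset (Fin n)) ∈ S2

/-- `A` is a clique of `S2`. -/
def CliqueA {n : ℕ} (S2 : Finset (Finset (Fin n))) (A : Finset (Fin n)) : Prop :=
  ∀ x ∈ A, ∀ y ∈ A, x ≠ y → ({x,y} : Finset (Fin n)) ∈ S2

lemma no_reach_pair {S2 : Finset (Finset (Fin n))} {W : Finset (Fin n)} {a b : Fin n}
    (hW : W ⊆ ({a,b} : Finset (Fin n))) (hab : a ≠ b)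
    (hnadj : ({a,b} : Finset (Fin n)) ∉ S2) : ¬ Reach S2 W a b := by
  rintro ⟨L, p, h0, hL, hedge, hmem⟩
  have key : ∀ j ≤ L, p j = a := by
    intro j
    induction j with
    | zero => intro _; exact h0
    | succ j IH =>
        intro hj
        have hpj := IH (by omega)
        rcases Finset.mem_insert.mp (hW (hmem (j+1) hj)) with h | h
        · exact h
        · exfalso
          apply hnadj
          have he := hedge j (by omega)
          rwa [hpj, Finset.mem_singleton.mp h] at he
  have := key L (le_refl _)
  rw [hL] at this
  exact hab this.symm

/-- Dirac's theorem, inductive form: every chordal graph, restricted to a vertex set `A`,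
is either a clique or has two nonadjacent simplicial vertices. -/
lemma dirac_main {S2 : Finset (Finset (Fin n))} (hS2 : ∀ F ∈ S2, F.card = 2)
    (hch : NoCCycle S2) :
    ∀ N (A : Finset (Fin n)), A.card ≤ N → CliqueA S2 A ∨
      ∃ x ∈ A, ∃ y ∈ A, x ≠ y ∧ ({x,y} : Finset (Fin n)) ∉ S2 ∧
        SimpIn S2 A x ∧ SimpIn S2 A y := by
  classical
  intro N
  induction N with
  | zero =>
      intro A hA
      left
      intro x hx
      exfalso
      rw [Nat.le_zero, Finset.card_eq_zero] at hA
      subst hA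
      exact absurd hx (Finset.notMem_empty _)
  | succ N IH =>
      intro A hA
      by_cases hclique : CliqueA S2 A
      · exact Or.inl hclique
      · right
        rw [CliqueA] at hclique
        push_neg at hclique
        obtain ⟨a, haA, b, hbA, hab, hnadj⟩ := hclique
        -- minimal separator
        set 𝒮 := ((A \ {a,b}).powerset).filter
          (fun S => ¬ Reach S2 (A \ S) a b) with h𝒮
        have h𝒮ne : 𝒮.Nonempty := by
          refine ⟨A \ {a,b}, Finset.mem_filter.mpr ⟨Finset.mem_powerset.mpr
            (Finset.Subset.refl _), ?_⟩⟩
          apply no_reach_pair ?_ hab hnadj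
          intro x hx
          obtain ⟨hxA, hxn⟩ := Finset.mem_sdiff.mp hx
          by_contra hxp
          exact hxn (Finset.mem_sdiff.mpr ⟨hxA, hxp⟩)
        obtain ⟨S, hSmem, hSmin⟩ := Finset.exists_min_image 𝒮 (fun S => S.card) h𝒮ne
        obtain ⟨hSpow, hSsep⟩ := Finset.mem_filter.mp hSmem
        have hSsub : S ⊆ A \ {a,b} := Finset.mem_powerset.mp hSpow
        set W := A \ S with hW
        have haS : a ∉ S := by
          intro h
          exact absurd (Finset.mem_insert_self a {b}) (Finset.mem_sdiff.mp (hSsub h)).2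
        have hbS : b ∉ S := by
          intro h
          exact absurd (by simp) (Finset.mem_sdiff.mp (hSsub h)).2
        have haW : a ∈ W := Finset.mem_sdiff.mpr ⟨haA, haS⟩
        have hbW : b ∈ W := Finset.mem_sdiff.mpr ⟨hbA, hbS⟩
        -- every separator vertex has neighbours in both components
        have hnbr : ∀ s ∈ S, (∃ u, Reach S2 W a u ∧ ({u,s} : Finset (Fin n)) ∈ S2) ∧
            (∃ u, Reach S2 W b u ∧ ({u,s} : Finset (Fin n)) ∈ S2) := by
          intro s hsS
          have hReach : Reach S2 (A \ (S.erase s)) a b := by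
            by_contra hcon
            have hmem' : S.erase s ∈ 𝒮 := Finset.mem_filter.mpr
              ⟨Finset.mem_powerset.mpr ((Finset.erase_subset _ _).trans hSsub), hcon⟩
            have := hSmin _ hmem'
            have hcard := Finset.card_erase_of_mem hsS
            have hSpos : 0 < S.card := Finset.card_pos.mpr ⟨s, hsS⟩
            omega
          have hsubins : A \ (S.erase s) ⊆ insert s W := by
            intro x hx
            obtain ⟨hxA, hxe⟩ := Finset.mem_sdiff.mp hx
            by_cases hxs : x = s
            · exact Finset.mem_insert.mpr (Or.inl hxs)
            · refine Finset.mem_insert.mpr (Or.inr (Finset.mem_sdiff.mpr ⟨hxA, ?_⟩))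
              intro hxS
              exact hxe (Finset.mem_erase.mpr ⟨hxs, hxS⟩)
          have hReach' : Reach S2 (insert s W) a b := reach_mono hsubins hReach
          constructor
          · obtain ⟨u, _, hu1, hu2⟩ := reach_escape hReach' hSsep haW
            exact ⟨u, hu1, hu2⟩
          · obtain ⟨u, _, hu1, hu2⟩ := reach_escape (reach_symm hReach')
              (fun h => hSsep (reach_symm h)) hbW
            exact ⟨u, hu1, hu2⟩
        -- the separator is a clique
        have hSclique : ∀ s ∈ S, ∀ t ∈ S, s ≠ t → ({s,t} : Finset (Fin n)) ∈ S2 := by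
          intro s hsS t htS hst
          by_contra hnst
          have hsW : s ∉ W := fun h => (Finset.mem_sdiff.mp h).2 hsS
          have htW : t ∉ W := fun h => (Finset.mem_sdiff.mp h).2 htS
          obtain ⟨La, p, hLa, hp0, hpL, hpe, hpi, hpinj, hpnc⟩ :=
            min_path hst hnst (hnbr s hsS).1 (hnbr t htS).1
          obtain ⟨Lb, q, hLb, hq0, hqL, hqe, hqi, hqinj, hqnc⟩ :=
            min_path hst.symm (by rwa [Finset.pair_comm]) (hnbr t htS).2 (hnbr s hsS).2
          exact glue_contra hch hSsep hsW htW hLa hp0 hpL hpe hpi hpinj hpnc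
            hLb hq0 hqL hqe hqi hqinj hqnc
        -- one simplicial vertex on each side
        have hside : ∀ v, v ∈ W →
            ∃ x, x ∈ A ∧ SimpIn S2 A x ∧ Reach S2 W v x := by
          intro v hvW
          have hvA : v ∈ A := (Finset.mem_sdiff.mp hvW).1
          set A1 := A.filter (fun u => u ∈ S ∨ Reach S2 W v u) with hA1
          have hA1sub : A1 ⊆ A := Finset.filter_subset _ _
          have hbA1 : b ∉ A1 ∨ a ∉ A1 := by
            -- at least one of a, b is not reachable from v
            by_cases hva : Reach S2 W v a
            · left
              intro h
              obtain ⟨-, hS | hR⟩ := Finset.mem_filter.mp h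
              · exact hbS hS
              · exact hSsep (reach_trans (reach_symm hva) hR)
            · by_cases hvb : Reach S2 W v b
              · right
                intro h
                obtain ⟨-, hS | hR⟩ := Finset.mem_filter.mp h
                · exact haS hS
                · exact hSsep (reach_trans (reach_symm hR) hvb)
              · left
                intro h
                obtain ⟨-, hS | hR⟩ := Finset.mem_filter.mp h
                · exact hbS hS
                · exact hvb hR
        -- A1 is strictly smaller
          have hA1lt : A1.card < A.card := by
            rcases hbA1 with h | h
            · exact Finset.card_lt_card ⟨hA1sub, fun hsub => h (hsub hbA)⟩
            · exact Finset.card_lt_card ⟨hA1sub, fun hsub => h (hsub haA)⟩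
          -- neighbours (in A) of a vertex of the component of v are in A1
          have hnbrA1 : ∀ x, x ∈ A → x ∉ S → Reach S2 W v x →
              ∀ u ∈ A, ({x,u} : Finset (Fin n)) ∈ S2 → u ∈ A1 := by
            intro x hxA hxS hvx u huA hadj
            refine Finset.mem_filter.mpr ⟨huA, ?_⟩
            by_cases huS : u ∈ S
            · exact Or.inl huS
            · right
              exact reach_step hvx hadj (Finset.mem_sdiff.mpr ⟨huA, huS⟩)
          rcases IH A1 (by omega) with hcl | hsimp
          · -- A1 is a clique: v itself is simplicial in A
            refine ⟨v, hvA, ?_, reach_refl hvW⟩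
            intro u huA u' huA' hadj hadj' huu'
            have hvS : v ∉ S := (Finset.mem_sdiff.mp hvW).2
            exact hcl u (hnbrA1 v hvA hvS (reach_refl hvW) u huA hadj)
              u' (hnbrA1 v hvA hvS (reach_refl hvW) u' huA' hadj') huu'
          · obtain ⟨x1, hx1, x2, hx2, hx12, hnadj12, hs1, hs2⟩ := hsimp
            -- not both can be in the clique S
            have hpick : ∃ x, x ∈ A1 ∧ x ∉ S ∧ SimpIn S2 A1 x := by
              by_cases h1 : x1 ∈ S
              · by_cases h2 : x2 ∈ S
                · exact absurd (hSclique x1 h1 x2 h2 hx12) hnadj12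
                · exact ⟨x2, hx2, h2, hs2⟩
              · exact ⟨x1, hx1, h1, hs1⟩
            obtain ⟨x, hxA1, hxS, hxsimp⟩ := hpick
            obtain ⟨hxA, hxSR⟩ := Finset.mem_filter.mp hxA1
            have hvx : Reach S2 W v x := by
              rcases hxSR with h | h
              · exact absurd h hxS
              · exact h
            refine ⟨x, hxA, ?_, hvx⟩
            intro u huA u' huA' hadj hadj' huu'
            exact hxsimp u (hnbrA1 x hxA hxS hvx u huA hadj)
              u' (hnbrA1 x hxA hxS hvx u' huA' hadj') hadj hadj' huu'
        obtain ⟨xa, hxaA, hxasimp, hxaR⟩ := hside a haW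
        obtain ⟨xb, hxbA, hxbsimp, hxbR⟩ := hside b hbW
        have hxab : xa ≠ xb := by
          intro h
          exact hSsep (reach_trans hxaR (reach_symm (h ▸ hxbR)))
        have hxnadj : ({xa, xb} : Finset (Fin n)) ∉ S2 := by
          intro hadj
          exact hSsep (reach_trans (reach_step hxaR hadj (reach_mem_right hxbR))
            (reach_symm hxbR))
        exact ⟨xa, hxaA, xb, hxbA, hxab, hxnadj, hxasimp, hxbsimp⟩

/-- A vertex with at least one edge whose neighbourhood is a clique gives a simplicial
`(k-1)`-face `{v}`. -/
lemma simplicialface_of_clique {S2 : Finset (Finset (Fin n))} (hS2 : ∀ F ∈ S2, F.card = 2)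
    {v u0 : Fin n} (hvu0 : ({v,u0} : Finset (Fin n)) ∈ S2)
    (hclq : ∀ u u', ({v,u} : Finset (Fin n)) ∈ S2 → ({v,u'} : Finset (Fin n)) ∈ S2 →
      u ≠ u' → ({u,u'} : Finset (Fin n)) ∈ S2) :
    SimplicialFace 2 S2 {v} := by
  classical
  have hvu0ne : v ≠ u0 := pair_ne (hS2 _ hvu0)
  set M : Finset (Fin n) := insert v (Finset.univ.filter
    (fun u => ({v,u} : Finset (Fin n)) ∈ S2)) with hM
  have hvM : v ∈ M := Finset.mem_insert_self _ _
  have hmemM : ∀ u, u ≠ v → (u ∈ M ↔ ({v,u} : Finset (Fin n)) ∈ S2) := by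
    intro u hu
    constructor
    · intro h
      rcases Finset.mem_insert.mp h with h' | h'
      · exact absurd h' hu
      · exact (Finset.mem_filter.mp h').2
    · intro h
      exact Finset.mem_insert.mpr (Or.inr (Finset.mem_filter.mpr ⟨Finset.mem_univ _, h⟩))
  have hu0M : u0 ∈ M := (hmemM u0 hvu0ne.symm).mpr hvu0
  have hMface : IsFace 2 S2 M := by
    refine Or.inr (fun G hG hGcard => ?_)
    obtain ⟨p, q, hpq, rfl⟩ := Finset.card_eq_two.mp hGcard
    have hpM : p ∈ M := hG (by simp)
    have hqM : q ∈ M := hG (by simp)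
    by_cases hpv : p = v
    · subst hpv
      exact (hmemM q (fun h => hpq h.symm)).mp hqM
    · by_cases hqv : q = v
      · subst hqv
        rw [Finset.pair_comm]
        exact (hmemM p hpv).mp hpM
      · exact hclq p q ((hmemM p hpv).mp hpM) ((hmemM q hqv).mp hqM) hpq
  have hssub : ({v} : Finset (Fin n)) ⊂ M := by
    refine (Finset.ssubset_iff_of_subset (Finset.singleton_subset_iff.mpr hvM)).mpr
      ⟨u0, hu0M, by simp [hvu0ne.symm]⟩
  refine ⟨M, ⟨⟨hMface, ?_⟩, hssub⟩, ?_⟩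
  · -- maximality
    intro G hGface hMG
    apply Finset.Subset.antisymm hMG
    intro w hwG
    by_cases hwM : w ∈ M
    · exact hwM
    · exfalso
      have hwv : w ≠ v := fun h => hwM (h ▸ hvM)
      have hcard2 : ¬ G.card < 2 := by
        have : ({v, u0} : Finset (Fin n)) ⊆ G := by
          intro x hx
          rcases Finset.mem_insert.mp hx with rfl | hx'
          · exact hMG hvM
          · rw [Finset.mem_singleton.mp hx']; exact hMG hu0M
        have hle := Finset.card_le_card this
        rw [Finset.card_pair hvu0ne] at hle
        omega
      rcases hGface with h | h
      · exact hcard2 h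
      · have : ({v, w} : Finset (Fin n)) ∈ S2 := by
          apply h
          · intro x hx
            rcases Finset.mem_insert.mp hx with rfl | hx'
            · exact hMG hvM
            · rw [Finset.mem_singleton.mp hx']; exact hwG
          · exact Finset.card_pair (fun h' => hwv h'.symm)
        exact hwM ((hmemM w hwv).mpr this)
  · -- uniqueness
    rintro X ⟨⟨hXface, hXmax⟩, hvX⟩
    have hvX' : v ∈ X := (subset_of_ssubset hvX) (by simp)
    have hXsubM : X ⊆ M := by
      intro w hwX
      by_cases hwv : w = v
      · rw [hwv]; exact hvM
      · have hcard2 : ¬ X.card < 2 := by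
          obtain ⟨u1, hu1X, hu1v⟩ := (Finset.ssubset_iff_of_subset
            (subset_of_ssubset hvX |>.trans (Finset.Subset.refl X))).mp hvX
          have : ({v, u1} : Finset (Fin n)) ⊆ X := by
            intro x hx
            rcases Finset.mem_insert.mp hx with rfl | hx'
            · exact hvX'
            · rw [Finset.mem_singleton.mp hx']; exact hu1X
          have hle := Finset.card_le_card this
          rw [Finset.card_pair (fun h => hu1v (Finset.mem_singleton.mpr h.symm))] at hle
          omega
        rcases hXface with h | h
        · exact absurd h hcard2
        · have : ({v, w} : Finset (Fin n)) ∈ S2 := by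
            apply h
            · intro x hx
              rcases Finset.mem_insert.mp hx with rfl | hx'
              · exact hvX'
              · rw [Finset.mem_singleton.mp hx']; exact hwX
            · exact Finset.card_pair (fun h' => hwv h'.symm)
          exact (hmemM w hwv).mpr this
    exact hXmax M hMface hXsubM

/-- Every nonempty chordal graph has a simplicial vertex with an edge. -/
lemma exists_simplicial {S2 : Finset (Finset (Fin n))} (hS2 : ∀ F ∈ S2, F.card = 2)
    (hch : NoCCycle S2) (hne : S2.Nonempty) :
    ∃ v u0, ({v,u0} : Finset (Fin n)) ∈ S2 ∧ SimplicialFace 2 S2 {v} ∧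
      ∀ u u', ({v,u} : Finset (Fin n)) ∈ S2 → ({v,u'} : Finset (Fin n)) ∈ S2 →
        u ≠ u' → ({u,u'} : Finset (Fin n)) ∈ S2 := by
  classical
  set A : Finset (Fin n) := Finset.univ.filter (fun x => ∃ e ∈ S2, x ∈ e) with hA
  have hmemA : ∀ x e, e ∈ S2 → x ∈ e → x ∈ A := by
    intro x e he hx
    exact Finset.mem_filter.mpr ⟨Finset.mem_univ _, e, he, hx⟩
  have key : ∃ v, (∃ u0, ({v,u0} : Finset (Fin n)) ∈ S2) ∧
      ∀ u u', ({v,u} : Finset (Fin n)) ∈ S2 → ({v,u'} : Finset (Fin n)) ∈ S2 →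
        u ≠ u' → ({u,u'} : Finset (Fin n)) ∈ S2 := by
    rcases dirac_main hS2 hch A.card A (le_refl _) with hcl | hsimp
    · obtain ⟨e, he⟩ := hne
      obtain ⟨a, b, hab, rfl⟩ := Finset.card_eq_two.mp (hS2 e he)
      refine ⟨a, ⟨b, he⟩, ?_⟩
      intro u u' hu hu' huu'
      exact hcl u (hmemA u _ hu (by simp)) u' (hmemA u' _ hu' (by simp)) huu'
    · obtain ⟨x, hxA, y, hyA, hxy, hnadj, hsx, hsy⟩ := hsimp
      obtain ⟨-, e, he, hxe⟩ := Finset.mem_filter.mp hxA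
      obtain ⟨u0, hxu0, rfl⟩ := mem_pair_repr (hS2 e he) hxe
      refine ⟨x, ⟨u0, he⟩, ?_⟩
      intro u u' hu hu' huu'
      exact hsx u (hmemA u _ hu (by simp)) u' (hmemA u' _ hu' (by simp)) hu hu' huu'
  obtain ⟨v, ⟨u0, hvu0⟩, hclq⟩ := key
  exact ⟨v, u0, hvu0, simplicialface_of_clique hS2 hvu0 hclq, hclq⟩

lemma superdense_empty : Superdense 𝔽 n 2 (∅ : Finset (Finset (Fin n))) := by
  refine ⟨fun _ => ∅, rfl, rfl, ?_, ?_, ?_⟩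
  · intro i _
    exact ⟨Finset.Subset.refl _, fun F hF _ => hF⟩
  · intro i hi
    rw [simRank_empty] at hi
    omega
  · intro i hi
    rw [simRank_empty] at hi
    omega

/-- Chordal graphs give superdense simplicial matroids. -/
lemma ch_sd (N : ℕ) : ∀ S2 : Finset (Finset (Fin n)), S2.card ≤ N →
    (∀ F ∈ S2, F.card = 2) → NoCCycle S2 → Superdense 𝔽 n 2 S2 := by
  induction N with
  | zero =>
      intro S2 hc _ _
      rw [Nat.le_zero, Finset.card_eq_zero] at hc
      subst hc
      exact superdense_empty
  | succ N IH =>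
      intro S2 hc hS2 hch
      rcases Finset.eq_empty_or_nonempty S2 with rfl | hne
      · exact superdense_empty
      obtain ⟨v, u0, hvu0, hsf, hclq⟩ := exists_simplicial hS2 hch hne
      set S2' := S2.filter (fun e => v ∉ e) with hS2'def
      have hS2'sub : S2' ⊆ S2 := Finset.filter_subset _ _
      have hS2'cards : ∀ F ∈ S2', F.card = 2 := fun F hF => hS2 F (hS2'sub hF)
      have hS2'v : ∀ e ∈ S2', v ∉ e := fun e he => (Finset.mem_filter.mp he).2
      have hch' : NoCCycle S2' := by
        intro m c hcyc hchord
        have hcyc2 : IsCycle2 S2 m c :=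
          ⟨hcyc.1, hcyc.2.1, fun i hi => hS2'sub (hcyc.2.2 i hi)⟩
        apply hch m c hcyc2
        intro i hi j hj hadj
        apply hchord i hi j hj
        refine Finset.mem_filter.mpr ⟨hadj, ?_⟩
        intro hv
        rcases Finset.mem_insert.mp hv with h | h
        · exact hS2'v _ (hcyc.2.2 i hi) (h ▸ Finset.mem_insert_self _ _)
        · exact hS2'v _ (hcyc.2.2 j hj)
            ((Finset.mem_singleton.mp h) ▸ Finset.mem_insert_self _ _)
      have hcard' : S2'.card < S2.card := Finset.card_lt_card
        ⟨hS2'sub, fun hsub => hS2'v _ (hsub hvu0) (Finset.mem_insert_self _ _)⟩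
      obtain ⟨X', hX0', hXr', hflat', hchain', hdh'⟩ := IH S2' (by omega) hS2'cards hch'
      set r' := simRank 𝔽 n 2 S2' with hr'
      have hclq' : ∀ u, ({v,u} : Finset (Fin n)) ∈ S2 → u ≠ u0 →
          ({u0,u} : Finset (Fin n)) ∈ S2 :=
        fun u hu hne' => hclq u0 u hvu0 hu (fun h => hne' h.symm)
      have hrank : simRank 𝔽 n 2 S2 = r' + 1 := star_rank hS2 hvu0 hclq'
      set r := simRank 𝔽 n 2 S2 with hrdef
      have hflatS2 : ∀ i, i ≤ r' → SimFlat 𝔽 n 2 S2 (X' i) := by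
        intro i hi
        refine ⟨(hflat' i hi).1.trans hS2'sub, ?_⟩
        intro F hF hsp
        by_cases hvF : v ∈ F
        · exfalso
          exact bvec_notin_sp (fun e he => hS2'cards e ((hflat' i hi).1 he))
            (fun e he => hS2'v e ((hflat' i hi).1 he)) (hS2 F hF) hvF hsp
        · exact (hflat' i hi).2 F (Finset.mem_filter.mpr ⟨hF, hvF⟩) hsp
      refine ⟨fun i => if i = r then S2 else X' i, ?_, ?_, ?_, ?_, ?_⟩
      · show (if 0 = r then S2 else X' 0) = ∅
        rw [if_neg (by omega), hX0']
      · show (if r = r then S2 else X' r) = S2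
        rw [if_pos rfl]
      · intro i hi
        show SimFlat 𝔽 n 2 S2 (if i = r then S2 else X' i)
        by_cases hir : i = r
        · rw [if_pos hir]
          exact ⟨Finset.Subset.refl _, fun F hF _ => hF⟩
        · rw [if_neg hir]
          exact hflatS2 i (by omega)
      · intro i hi
        show (if i = r then S2 else X' i) ⊂ (if i + 1 = r then S2 else X' (i+1))
        by_cases hir : i + 1 = r
        · rw [if_neg (by omega), if_pos hir]
          have hieq : i = r' := by omega
          rw [hieq, hXr']
          exact ⟨hS2'sub, fun hsub => hS2'v _ (hsub hvu0) (Finset.mem_insert_self _ _)⟩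
        · rw [if_neg (by omega), if_neg hir]
          exact hchain' i (by omega)
      · intro i hi
        show DenseHyp 𝔽 n 2 (if i + 1 = r then S2 else X' (i+1))
          (if i = r then S2 else X' i)
        by_cases hir : i + 1 = r
        · rw [if_pos hir, if_neg (by omega)]
          have hieq : i = r' := by omega
          rw [hieq, hXr']
          refine ⟨⟨?_, ?_⟩, {v}, Finset.card_singleton v, hsf, ?_⟩
          · have hfl := hflatS2 r' (le_refl _)
            rwa [hXr'] at hfl
          · exact hrank.symm
          · rw [sdiff_suppδ hS2 v]
        · rw [if_neg hir, if_neg (by omega)]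
          rw [← hrdef] at hi
          exact hdh' i (by omega)

end PartI

theorem stmt16 (𝔽 : Type*) [Field 𝔽] (n : ℕ) (hn : 2 ≤ n)
    (S2 : Finset (Finset (Fin n))) (hS2 : ∀ F ∈ S2, F.card = 2) :
    Superdense 𝔽 n 2 S2 ↔ Supersolvable 𝔽 n 2 S2 :=
  ⟨fun h => dir1 hS2 h,
   fun h => ch_sd S2.card S2 (le_refl _) hS2 (stanley hS2 h)⟩
end

section
/- Let 𝔽 be a field of characteristic different from 2 and let S_3 = {{1,2,4},{1,2,6},{1,3,4},{1,3,5},{1,5,6},{2,3,5},{2,3,6},{2,4,5},{3,4,6},{4,5,6}} ⊆ C([6],3) (the triangles of the minimal triangulation of the projective plane). Then the ten vectors {∂_3 F : F ∈ S_3} are linearly independent in 𝔽^{C([6],2)}; equivalently, the simplicial matroid Sim_3^6(S_3) over 𝔽 has no circuits. -/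
/-!
Common definitions for simplicial matroids, following Cordovil–Lemos–Linhares Sales,
"Dirac's theorem on simplicial matroids".

We model `[n] = {1,…,n}` by `Fin n`, and a subset of `[n]` by a `Finset (Fin n)`.
A family `S_k ⊆ C([n],k)` is a `Finset (Finset (Fin n))` (all of whose members
have cardinality `k`, which is imposed by hypotheses in the theorems).
-/

open Finset

/-- The triangles of the minimal triangulation of the projective plane, on 6 vertices.
(Vertices are relabelled from `{1,…,6}` to `Fin 6 = {0,…,5}` by `i ↦ i - 1`.) -/
def projPlaneS3 : Finset (Finset (Fin 6)) :=
  {{0,1,3}, {0,1,5}, {0,2,3}, {0,2,4}, {0,4,5}, {1,2,4}, {1,2,5}, {1,3,4}, {2,3,5}, {3,4,5}}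

-- auxiliary lemmas
lemma sum_projPlaneS3 {M : Type*} [AddCommMonoid M] (f : Finset (Fin 6) → M) :
    ∑ F ∈ projPlaneS3, f F = f {0,1,3} + (f {0,1,5} + (f {0,2,3} + (f {0,2,4} + (f {0,4,5} + (f {1,2,4} + (f {1,2,5} + (f {1,3,4} + (f {2,3,5} + (f {3,4,5}))))))))) := by
  simp only [projPlaneS3]
  rw [Finset.sum_insert (by decide), Finset.sum_insert (by decide), Finset.sum_insert (by decide),
    Finset.sum_insert (by decide), Finset.sum_insert (by decide), Finset.sum_insert (by decide),
    Finset.sum_insert (by decide), Finset.sum_insert (by decide), Finset.sum_insert (by decide),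
    Finset.sum_singleton]

lemma iv_01_013 : inc ({0,1} : Finset (Fin 6)) {0,1,3} = -1 := by decide
lemma iv_01_015 : inc ({0,1} : Finset (Fin 6)) {0,1,5} = -1 := by decide
lemma iv_01_023 : inc ({0,1} : Finset (Fin 6)) {0,2,3} = 0 := by decide
lemma iv_01_024 : inc ({0,1} : Finset (Fin 6)) {0,2,4} = 0 := by decide
lemma iv_01_045 : inc ({0,1} : Finset (Fin 6)) {0,4,5} = 0 := by decide
lemma iv_01_124 : inc ({0,1} : Finset (Fin 6)) {1,2,4} = 0 := by decide
lemma iv_01_125 : inc ({0,1} : Finset (Fin 6)) {1,2,5} = 0 := by decide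
lemma iv_01_134 : inc ({0,1} : Finset (Fin 6)) {1,3,4} = 0 := by decide
lemma iv_01_235 : inc ({0,1} : Finset (Fin 6)) {2,3,5} = 0 := by decide
lemma iv_01_345 : inc ({0,1} : Finset (Fin 6)) {3,4,5} = 0 := by decide
lemma iv_02_013 : inc ({0,2} : Finset (Fin 6)) {0,1,3} = 0 := by decide
lemma iv_02_015 : inc ({0,2} : Finset (Fin 6)) {0,1,5} = 0 := by decide
lemma iv_02_023 : inc ({0,2} : Finset (Fin 6)) {0,2,3} = -1 := by decide
lemma iv_02_024 : inc ({0,2} : Finset (Fin 6)) {0,2,4} = -1 := by decide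
lemma iv_02_045 : inc ({0,2} : Finset (Fin 6)) {0,4,5} = 0 := by decide
lemma iv_02_124 : inc ({0,2} : Finset (Fin 6)) {1,2,4} = 0 := by decide
lemma iv_02_125 : inc ({0,2} : Finset (Fin 6)) {1,2,5} = 0 := by decide
lemma iv_02_134 : inc ({0,2} : Finset (Fin 6)) {1,3,4} = 0 := by decide
lemma iv_02_235 : inc ({0,2} : Finset (Fin 6)) {2,3,5} = 0 := by decide
lemma iv_02_345 : inc ({0,2} : Finset (Fin 6)) {3,4,5} = 0 := by decide
lemma iv_03_013 : inc ({0,3} : Finset (Fin 6)) {0,1,3} = 1 := by decide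
lemma iv_03_015 : inc ({0,3} : Finset (Fin 6)) {0,1,5} = 0 := by decide
lemma iv_03_023 : inc ({0,3} : Finset (Fin 6)) {0,2,3} = 1 := by decide
lemma iv_03_024 : inc ({0,3} : Finset (Fin 6)) {0,2,4} = 0 := by decide
lemma iv_03_045 : inc ({0,3} : Finset (Fin 6)) {0,4,5} = 0 := by decide
lemma iv_03_124 : inc ({0,3} : Finset (Fin 6)) {1,2,4} = 0 := by decide
lemma iv_03_125 : inc ({0,3} : Finset (Fin 6)) {1,2,5} = 0 := by decide
lemma iv_03_134 : inc ({0,3} : Finset (Fin 6)) {1,3,4} = 0 := by decide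
lemma iv_03_235 : inc ({0,3} : Finset (Fin 6)) {2,3,5} = 0 := by decide
lemma iv_03_345 : inc ({0,3} : Finset (Fin 6)) {3,4,5} = 0 := by decide
lemma iv_04_013 : inc ({0,4} : Finset (Fin 6)) {0,1,3} = 0 := by decide
lemma iv_04_015 : inc ({0,4} : Finset (Fin 6)) {0,1,5} = 0 := by decide
lemma iv_04_023 : inc ({0,4} : Finset (Fin 6)) {0,2,3} = 0 := by decide
lemma iv_04_024 : inc ({0,4} : Finset (Fin 6)) {0,2,4} = 1 := by decide
lemma iv_04_045 : inc ({0,4} : Finset (Fin 6)) {0,4,5} = -1 := by decide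
lemma iv_04_124 : inc ({0,4} : Finset (Fin 6)) {1,2,4} = 0 := by decide
lemma iv_04_125 : inc ({0,4} : Finset (Fin 6)) {1,2,5} = 0 := by decide
lemma iv_04_134 : inc ({0,4} : Finset (Fin 6)) {1,3,4} = 0 := by decide
lemma iv_04_235 : inc ({0,4} : Finset (Fin 6)) {2,3,5} = 0 := by decide
lemma iv_04_345 : inc ({0,4} : Finset (Fin 6)) {3,4,5} = 0 := by decide
lemma iv_12_013 : inc ({1,2} : Finset (Fin 6)) {0,1,3} = 0 := by decide
lemma iv_12_015 : inc ({1,2} : Finset (Fin 6)) {0,1,5} = 0 := by decide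
lemma iv_12_023 : inc ({1,2} : Finset (Fin 6)) {0,2,3} = 0 := by decide
lemma iv_12_024 : inc ({1,2} : Finset (Fin 6)) {0,2,4} = 0 := by decide
lemma iv_12_045 : inc ({1,2} : Finset (Fin 6)) {0,4,5} = 0 := by decide
lemma iv_12_124 : inc ({1,2} : Finset (Fin 6)) {1,2,4} = -1 := by decide
lemma iv_12_125 : inc ({1,2} : Finset (Fin 6)) {1,2,5} = -1 := by decide
lemma iv_12_134 : inc ({1,2} : Finset (Fin 6)) {1,3,4} = 0 := by decide
lemma iv_12_235 : inc ({1,2} : Finset (Fin 6)) {2,3,5} = 0 := by decide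
lemma iv_12_345 : inc ({1,2} : Finset (Fin 6)) {3,4,5} = 0 := by decide
lemma iv_13_013 : inc ({1,3} : Finset (Fin 6)) {0,1,3} = -1 := by decide
lemma iv_13_015 : inc ({1,3} : Finset (Fin 6)) {0,1,5} = 0 := by decide
lemma iv_13_023 : inc ({1,3} : Finset (Fin 6)) {0,2,3} = 0 := by decide
lemma iv_13_024 : inc ({1,3} : Finset (Fin 6)) {0,2,4} = 0 := by decide
lemma iv_13_045 : inc ({1,3} : Finset (Fin 6)) {0,4,5} = 0 := by decide
lemma iv_13_124 : inc ({1,3} : Finset (Fin 6)) {1,2,4} = 0 := by decide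
lemma iv_13_125 : inc ({1,3} : Finset (Fin 6)) {1,2,5} = 0 := by decide
lemma iv_13_134 : inc ({1,3} : Finset (Fin 6)) {1,3,4} = -1 := by decide
lemma iv_13_235 : inc ({1,3} : Finset (Fin 6)) {2,3,5} = 0 := by decide
lemma iv_13_345 : inc ({1,3} : Finset (Fin 6)) {3,4,5} = 0 := by decide
lemma iv_14_013 : inc ({1,4} : Finset (Fin 6)) {0,1,3} = 0 := by decide
lemma iv_14_015 : inc ({1,4} : Finset (Fin 6)) {0,1,5} = 0 := by decide
lemma iv_14_023 : inc ({1,4} : Finset (Fin 6)) {0,2,3} = 0 := by decide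
lemma iv_14_024 : inc ({1,4} : Finset (Fin 6)) {0,2,4} = 0 := by decide
lemma iv_14_045 : inc ({1,4} : Finset (Fin 6)) {0,4,5} = 0 := by decide
lemma iv_14_124 : inc ({1,4} : Finset (Fin 6)) {1,2,4} = 1 := by decide
lemma iv_14_125 : inc ({1,4} : Finset (Fin 6)) {1,2,5} = 0 := by decide
lemma iv_14_134 : inc ({1,4} : Finset (Fin 6)) {1,3,4} = 1 := by decide
lemma iv_14_235 : inc ({1,4} : Finset (Fin 6)) {2,3,5} = 0 := by decide
lemma iv_14_345 : inc ({1,4} : Finset (Fin 6)) {3,4,5} = 0 := by decide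
lemma iv_23_013 : inc ({2,3} : Finset (Fin 6)) {0,1,3} = 0 := by decide
lemma iv_23_015 : inc ({2,3} : Finset (Fin 6)) {0,1,5} = 0 := by decide
lemma iv_23_023 : inc ({2,3} : Finset (Fin 6)) {0,2,3} = -1 := by decide
lemma iv_23_024 : inc ({2,3} : Finset (Fin 6)) {0,2,4} = 0 := by decide
lemma iv_23_045 : inc ({2,3} : Finset (Fin 6)) {0,4,5} = 0 := by decide
lemma iv_23_124 : inc ({2,3} : Finset (Fin 6)) {1,2,4} = 0 := by decide
lemma iv_23_125 : inc ({2,3} : Finset (Fin 6)) {1,2,5} = 0 := by decide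
lemma iv_23_134 : inc ({2,3} : Finset (Fin 6)) {1,3,4} = 0 := by decide
lemma iv_23_235 : inc ({2,3} : Finset (Fin 6)) {2,3,5} = -1 := by decide
lemma iv_23_345 : inc ({2,3} : Finset (Fin 6)) {3,4,5} = 0 := by decide
lemma iv_24_013 : inc ({2,4} : Finset (Fin 6)) {0,1,3} = 0 := by decide
lemma iv_24_015 : inc ({2,4} : Finset (Fin 6)) {0,1,5} = 0 := by decide
lemma iv_24_023 : inc ({2,4} : Finset (Fin 6)) {0,2,3} = 0 := by decide
lemma iv_24_024 : inc ({2,4} : Finset (Fin 6)) {0,2,4} = -1 := by decide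
lemma iv_24_045 : inc ({2,4} : Finset (Fin 6)) {0,4,5} = 0 := by decide
lemma iv_24_124 : inc ({2,4} : Finset (Fin 6)) {1,2,4} = -1 := by decide
lemma iv_24_125 : inc ({2,4} : Finset (Fin 6)) {1,2,5} = 0 := by decide
lemma iv_24_134 : inc ({2,4} : Finset (Fin 6)) {1,3,4} = 0 := by decide
lemma iv_24_235 : inc ({2,4} : Finset (Fin 6)) {2,3,5} = 0 := by decide
lemma iv_24_345 : inc ({2,4} : Finset (Fin 6)) {3,4,5} = 0 := by decide
lemma iv_34_013 : inc ({3,4} : Finset (Fin 6)) {0,1,3} = 0 := by decide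
lemma iv_34_015 : inc ({3,4} : Finset (Fin 6)) {0,1,5} = 0 := by decide
lemma iv_34_023 : inc ({3,4} : Finset (Fin 6)) {0,2,3} = 0 := by decide
lemma iv_34_024 : inc ({3,4} : Finset (Fin 6)) {0,2,4} = 0 := by decide
lemma iv_34_045 : inc ({3,4} : Finset (Fin 6)) {0,4,5} = 0 := by decide
lemma iv_34_124 : inc ({3,4} : Finset (Fin 6)) {1,2,4} = 0 := by decide
lemma iv_34_125 : inc ({3,4} : Finset (Fin 6)) {1,2,5} = 0 := by decide
lemma iv_34_134 : inc ({3,4} : Finset (Fin 6)) {1,3,4} = -1 := by decide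
lemma iv_34_235 : inc ({3,4} : Finset (Fin 6)) {2,3,5} = 0 := by decide
lemma iv_34_345 : inc ({3,4} : Finset (Fin 6)) {3,4,5} = -1 := by decide

lemma keyLI (𝔽 : Type*) [Field 𝔽] (hchar : ringChar 𝔽 ≠ 2) :
    LinearIndependent 𝔽 (fun F : projPlaneS3 => bvec 𝔽 6 3 F.1) := by
  classical
  have h2ne : (2 : 𝔽) ≠ 0 := Ring.two_ne_zero hchar
  rw [Fintype.linearIndependent_iff]
  intro g hg
  set G : Finset (Fin 6) → 𝔽 := fun F => if h : F ∈ projPlaneS3 then g ⟨F, h⟩ else 0 with hGdef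
  have hG : ∀ i : projPlaneS3, g i = G i.1 := by
    intro i
    simp only [hGdef]
    rw [dif_pos i.2]
  have hsum : ∀ (P : Finset (Fin 6)) (hP : P.card = 2), G {0,1,3} * ((inc P {0,1,3} : ℤ) : 𝔽) + (G {0,1,5} * ((inc P {0,1,5} : ℤ) : 𝔽) + (G {0,2,3} * ((inc P {0,2,3} : ℤ) : 𝔽) + (G {0,2,4} * ((inc P {0,2,4} : ℤ) : 𝔽) + (G {0,4,5} * ((inc P {0,4,5} : ℤ) : 𝔽) + (G {1,2,4} * ((inc P {1,2,4} : ℤ) : 𝔽) + (G {1,2,5} * ((inc P {1,2,5} : ℤ) : 𝔽) + (G {1,3,4} * ((inc P {1,3,4} : ℤ) : 𝔽) + (G {2,3,5} * ((inc P {2,3,5} : ℤ) : 𝔽) + (G {3,4,5} * ((inc P {3,4,5} : ℤ) : 𝔽)))))))))) = 0 := by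
    intro P hP
    have h1 := congrFun hg (⟨P, hP⟩ : Csets 6 2)
    simp only [Finset.sum_apply, Pi.smul_apply, Pi.zero_apply, smul_eq_mul] at h1
    have h2 : ∑ F ∈ projPlaneS3, G F * bvec 𝔽 6 3 F ⟨P, hP⟩ = 0 := by
      rw [← h1, Finset.univ_eq_attach,
        ← Finset.sum_attach projPlaneS3 (fun F => G F * bvec 𝔽 6 3 F ⟨P, hP⟩)]
      exact Finset.sum_congr rfl fun i _ => by rw [hG i]
    rw [sum_projPlaneS3 (fun F => G F * bvec 𝔽 6 3 F ⟨P, hP⟩)] at h2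
    exact h2
  have e01 := hsum {0,1} (by decide)
  simp only [iv_01_013, iv_01_015, iv_01_023, iv_01_024, iv_01_045, iv_01_124, iv_01_125, iv_01_134, iv_01_235, iv_01_345, Int.cast_neg, Int.cast_one, Int.cast_zero] at e01
  have e02 := hsum {0,2} (by decide)
  simp only [iv_02_013, iv_02_015, iv_02_023, iv_02_024, iv_02_045, iv_02_124, iv_02_125, iv_02_134, iv_02_235, iv_02_345, Int.cast_neg, Int.cast_one, Int.cast_zero] at e02
  have e03 := hsum {0,3} (by decide)
  simp only [iv_03_013, iv_03_015, iv_03_023, iv_03_024, iv_03_045, iv_03_124, iv_03_125, iv_03_134, iv_03_235, iv_03_345, Int.cast_neg, Int.cast_one, Int.cast_zero] at e03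
  have e04 := hsum {0,4} (by decide)
  simp only [iv_04_013, iv_04_015, iv_04_023, iv_04_024, iv_04_045, iv_04_124, iv_04_125, iv_04_134, iv_04_235, iv_04_345, Int.cast_neg, Int.cast_one, Int.cast_zero] at e04
  have e12 := hsum {1,2} (by decide)
  simp only [iv_12_013, iv_12_015, iv_12_023, iv_12_024, iv_12_045, iv_12_124, iv_12_125, iv_12_134, iv_12_235, iv_12_345, Int.cast_neg, Int.cast_one, Int.cast_zero] at e12
  have e13 := hsum {1,3} (by decide)
  simp only [iv_13_013, iv_13_015, iv_13_023, iv_13_024, iv_13_045, iv_13_124, iv_13_125, iv_13_134, iv_13_235, iv_13_345, Int.cast_neg, Int.cast_one, Int.cast_zero] at e13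
  have e14 := hsum {1,4} (by decide)
  simp only [iv_14_013, iv_14_015, iv_14_023, iv_14_024, iv_14_045, iv_14_124, iv_14_125, iv_14_134, iv_14_235, iv_14_345, Int.cast_neg, Int.cast_one, Int.cast_zero] at e14
  have e23 := hsum {2,3} (by decide)
  simp only [iv_23_013, iv_23_015, iv_23_023, iv_23_024, iv_23_045, iv_23_124, iv_23_125, iv_23_134, iv_23_235, iv_23_345, Int.cast_neg, Int.cast_one, Int.cast_zero] at e23
  have e24 := hsum {2,4} (by decide)
  simp only [iv_24_013, iv_24_015, iv_24_023, iv_24_024, iv_24_045, iv_24_124, iv_24_125, iv_24_134, iv_24_235, iv_24_345, Int.cast_neg, Int.cast_one, Int.cast_zero] at e24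
  have e34 := hsum {3,4} (by decide)
  simp only [iv_34_013, iv_34_015, iv_34_023, iv_34_024, iv_34_045, iv_34_124, iv_34_125, iv_34_134, iv_34_235, iv_34_345, Int.cast_neg, Int.cast_one, Int.cast_zero] at e34
  have z0 : G {0,1,3} = 0 := by
    have h2 : (2 : 𝔽) * G {0,1,3} = 0 := by linear_combination e02 + e03 - e13 - e14 - e24
    exact (mul_eq_zero.mp h2).resolve_left h2ne
  have z1 : G {0,1,5} = 0 := by
    have h2 : (2 : 𝔽) * G {0,1,5} = 0 := by linear_combination -2 * e01 - e02 - e03 + e13 + e14 + e24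
    exact (mul_eq_zero.mp h2).resolve_left h2ne
  have z2 : G {0,2,3} = 0 := by
    have h2 : (2 : 𝔽) * G {0,2,3} = 0 := by linear_combination -e02 + e03 + e13 + e14 + e24
    exact (mul_eq_zero.mp h2).resolve_left h2ne
  have z3 : G {0,2,4} = 0 := by
    have h2 : (2 : 𝔽) * G {0,2,4} = 0 := by linear_combination -e02 - e03 - e13 - e14 - e24
    exact (mul_eq_zero.mp h2).resolve_left h2ne
  have z4 : G {0,4,5} = 0 := by
    have h2 : (2 : 𝔽) * G {0,4,5} = 0 := by linear_combination -e02 - e03 - 2 * e04 - e13 - e14 - e24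
    exact (mul_eq_zero.mp h2).resolve_left h2ne
  have z5 : G {1,2,4} = 0 := by
    have h2 : (2 : 𝔽) * G {1,2,4} = 0 := by linear_combination e02 + e03 + e13 + e14 - e24
    exact (mul_eq_zero.mp h2).resolve_left h2ne
  have z6 : G {1,2,5} = 0 := by
    have h2 : (2 : 𝔽) * G {1,2,5} = 0 := by linear_combination -e02 - e03 - 2 * e12 - e13 - e14 + e24
    exact (mul_eq_zero.mp h2).resolve_left h2ne
  have z7 : G {1,3,4} = 0 := by
    have h2 : (2 : 𝔽) * G {1,3,4} = 0 := by linear_combination -e02 - e03 - e13 + e14 + e24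
    exact (mul_eq_zero.mp h2).resolve_left h2ne
  have z8 : G {2,3,5} = 0 := by
    have h2 : (2 : 𝔽) * G {2,3,5} = 0 := by linear_combination e02 - e03 - e13 - e14 - 2 * e23 - e24
    exact (mul_eq_zero.mp h2).resolve_left h2ne
  have z9 : G {3,4,5} = 0 := by
    have h2 : (2 : 𝔽) * G {3,4,5} = 0 := by linear_combination e02 + e03 + e13 - e14 - e24 - 2 * e34
    exact (mul_eq_zero.mp h2).resolve_left h2ne
  intro i
  rw [hG i]
  obtain ⟨F, hF⟩ := i
  simp only [projPlaneS3, Finset.mem_insert, Finset.mem_singleton] at hF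
  rcases hF with rfl | rfl | rfl | rfl | rfl | rfl | rfl | rfl | rfl | rfl
  exacts [z0, z1, z2, z3, z4, z5, z6, z7, z8, z9]

theorem stmt17 (𝔽 : Type*) [Field 𝔽] (hchar : ringChar 𝔽 ≠ 2) :
    LinearIndependent 𝔽 (fun F : projPlaneS3 => bvec 𝔽 6 3 F.1) ∧
      ∀ C, ¬ SimCircuit 𝔽 6 3 projPlaneS3 C := by
  have key := keyLI 𝔽 hchar
  refine ⟨key, fun C hC => ?_⟩
  obtain ⟨hsub, hdep, -⟩ := hC
  refine hdep (key.comp (fun x : C => (⟨x.1, hsub x.2⟩ : projPlaneS3)) ?_)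
  intro a b h
  simp only [Subtype.mk.injEq] at h
  exact Subtype.ext h
end
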